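/- arXiv:0810.4279 — 5 statements merged into one kernel-verified Lean document; each statement's English description precedes it below -/
import Mathlib

section
/- Let S be a finite set of nonzero vectors in ℤ^n and let V be a real linear subspace of ℝ^n with 1 ≤ dim V ≤ n − 1. Suppose that every vector of V is a nonnegative real linear combination of elements of S ∩ V (i.e., the elements of S lying in V positively span V). Then S is 'special': there exist k distinct elements v_1, …, v_k ∈ S with 1 ≤ k ≤ n and positive integers a_1, …, a_k such that a_1 v_1 + ⋯ + a_k v_k = 0. (This is the combinatorial heart of Proposition 1.7: the fiber fan of a proper surjective toric morphism with lower-dimensional target is a complete fan in a proper subspace, forcing a positive relation among at most n ray generators.) -/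
/-- The canonical map `ℤ^n → ℝ^n`. -/
def toReal {n : ℕ} (v : Fin n → ℤ) : Fin n → ℝ := fun i => (v i : ℝ)

/-- A finite set `S` of vectors in `ℤ^n` is *special* if there exist `k` distinct
elements `v 0, …, v (k-1)` of `S` with `1 ≤ k ≤ n` and positive integers
`a 0, …, a (k-1)` such that `∑ i, a i • v i = 0`. -/
def IsSpecial (n : ℕ) (S : Finset (Fin n → ℤ)) : Prop :=
  ∃ (k : ℕ) (v : Fin k → (Fin n → ℤ)) (a : Fin k → ℤ),
    1 ≤ k ∧ k ≤ n ∧ Function.Injective v ∧ (∀ i, v i ∈ S) ∧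
    (∀ i, 0 < a i) ∧ ∑ i, a i • v i = 0

open Finset Matrix

/-- From a nontrivial real linear relation among integer vectors, extract a nontrivial
rational linear relation, via the Gram matrix. -/
lemma exists_rat_relation {n : ℕ} (T : Finset (Fin n → ℤ)) (c : (Fin n → ℤ) → ℝ)
    (hc0 : ∃ v ∈ T, c v ≠ 0)
    (hrel : ∑ v ∈ T, c v • toReal v = 0) :
    ∃ y : ↑T → ℚ, y ≠ 0 ∧ ∀ i, ∑ v : ↑T, y v * ((v : Fin n → ℤ) i : ℚ) = 0 := by
  classical
  set M : Matrix (Fin n) ↑T ℚ := fun i v => ((v : Fin n → ℤ) i : ℚ) with hM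
  set G : Matrix ↑T ↑T ℚ := Mᵀ * M with hG
  let f : ℚ →+* ℝ := Rat.castHom ℝ
  have hMc : (M.map f) *ᵥ (fun v : ↑T => c ↑v) = 0 := by
    funext i
    have h1 : (∑ v ∈ T, c v • toReal v) i = 0 := by rw [hrel]; rfl
    rw [Finset.sum_apply] at h1
    simp only [Pi.smul_apply, smul_eq_mul, toReal] at h1
    simp only [Matrix.mulVec, dotProduct, Matrix.map_apply, Pi.zero_apply, hM,
      map_intCast]
    show ∑ x : ↑T, f (((x : Fin n → ℤ) i : ℤ) : ℚ) * c ↑x = 0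
    simp only [map_intCast]
    rw [Finset.sum_coe_sort T (fun v => ((v i : ℤ) : ℝ) * c v)]
    rw [← h1]
    exact Finset.sum_congr rfl fun v _ => mul_comm _ _
  have hGmap : G.map f = (M.map f)ᵀ * (M.map f) := by
    rw [hG, Matrix.map_mul, Matrix.transpose_map]
  have hGc : (G.map f) *ᵥ (fun v : ↑T => c ↑v) = 0 := by
    rw [hGmap, ← Matrix.mulVec_mulVec, hMc, Matrix.mulVec_zero]
  have hcne : (fun v : ↑T => c ↑v) ≠ 0 := by
    obtain ⟨v, hv, hcv⟩ := hc0
    intro h0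
    exact hcv (congrFun h0 ⟨v, hv⟩)
  have hdetR : (G.map f).det = 0 :=
    Matrix.exists_mulVec_eq_zero_iff.mp ⟨_, hcne, hGc⟩
  have hdetQ : G.det = 0 := by
    have h3 : ((G.det : ℚ) : ℝ) = 0 := (RingHom.map_det f G).trans hdetR
    exact_mod_cast h3
  obtain ⟨y, hy0, hGy⟩ := Matrix.exists_mulVec_eq_zero_iff.mpr hdetQ
  refine ⟨y, hy0, ?_⟩
  have h2 : (M *ᵥ y) ⬝ᵥ (M *ᵥ y) = 0 := by
    calc (M *ᵥ y) ⬝ᵥ (M *ᵥ y) = (y ᵥ* Mᵀ) ⬝ᵥ (M *ᵥ y) := by rw [Matrix.vecMul_transpose]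
    _ = y ⬝ᵥ (Mᵀ *ᵥ (M *ᵥ y)) := (Matrix.dotProduct_mulVec _ _ _).symm
    _ = y ⬝ᵥ (G *ᵥ y) := by rw [Matrix.mulVec_mulVec]
    _ = 0 := by rw [hGy, dotProduct_zero]
  have hMy : M *ᵥ y = 0 := by
    funext i
    rw [dotProduct] at h2
    have := (Finset.sum_eq_zero_iff_of_nonneg
      (fun j _ => mul_self_nonneg ((M *ᵥ y) j))).mp h2 i (Finset.mem_univ i)
    exact mul_self_eq_zero.mp this
  intro i
  have := congrFun hMy i
  simp only [Matrix.mulVec, dotProduct, hM, Pi.zero_apply] at this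
  rw [← this]
  exact Finset.sum_congr rfl fun v _ => mul_comm _ _

/-- Let `S` be a finite set of nonzero vectors in `ℤ^n` and let `V ⊆ ℝ^n` be a real
linear subspace with `1 ≤ dim V ≤ n - 1`.  If every vector of `V` is a nonnegative real
linear combination of the elements of `S` lying in `V`, then `S` is *special*. -/
theorem special_of_subspace_positively_spanned (n : ℕ) (S : Finset (Fin n → ℤ))
    (hnz : ∀ v ∈ S, v ≠ 0) (V : Submodule ℝ (Fin n → ℝ))
    (hdim₁ : 1 ≤ Module.finrank ℝ V) (hdim₂ : Module.finrank ℝ V ≤ n - 1)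
    (hspan : ∀ x ∈ V, ∃ c : (Fin n → ℤ) → ℝ,
      (∀ v, 0 ≤ c v) ∧ (∀ v ∈ S, c v ≠ 0 → toReal v ∈ V) ∧
      x = ∑ v ∈ S, c v • toReal v) :
    IsSpecial n S := by
  classical
  -- the predicate we minimize over
  set Q : Finset (Fin n → ℤ) → Prop := fun T =>
    T ⊆ S ∧ (∀ v ∈ T, toReal v ∈ V) ∧ T.Nonempty ∧
      ∃ c : (Fin n → ℤ) → ℝ, (∀ v ∈ T, 0 < c v) ∧ ∑ v ∈ T, c v • toReal v = 0 with hQdef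
  -- Step A : Q holds for some set
  have hQ0 : ∃ T, Q T := by
    have hpos : 0 < Module.finrank ℝ V := hdim₁
    obtain ⟨x, hx⟩ := Module.finrank_pos_iff_exists_ne_zero.mp hpos
    obtain ⟨c₁, hc₁nn, hc₁V, hc₁x⟩ := hspan ↑x x.2
    obtain ⟨c₂, hc₂nn, hc₂V, hc₂x⟩ := hspan (-↑x) (V.neg_mem x.2)
    set c₀ : (Fin n → ℤ) → ℝ := fun v => c₁ v + c₂ v with hc₀def
    have hsum0 : ∑ v ∈ S, c₀ v • toReal v = 0 := by
      simp only [hc₀def, add_smul, Finset.sum_add_distrib]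
      rw [← hc₁x, ← hc₂x]
      exact add_neg_cancel _
    refine ⟨S.filter (fun v => c₀ v ≠ 0), Finset.filter_subset _ _, ?_, ?_, c₀, ?_, ?_⟩
    · intro v hv
      obtain ⟨hvS, hv0⟩ := Finset.mem_filter.mp hv
      rcases ne_or_eq (c₁ v) 0 with h | h
      · exact hc₁V v hvS h
      · exact hc₂V v hvS (by
          intro h2
          exact hv0 (by simp [hc₀def, h, h2]))
    · by_contra hemp
      rw [Finset.not_nonempty_iff_eq_empty, Finset.filter_eq_empty_iff] at hemp
      have hx0 : (x : Fin n → ℝ) = 0 := by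
        rw [hc₁x]
        refine Finset.sum_eq_zero fun v hv => ?_
        have h := hemp hv
        rw [not_not] at h
        have h1 : c₁ v = 0 := by
          have := hc₁nn v; have := hc₂nn v
          simp only [hc₀def] at h; linarith
        rw [h1, zero_smul]
      exact hx (Subtype.ext hx0)
    · intro v hv
      obtain ⟨hvS, hv0⟩ := Finset.mem_filter.mp hv
      exact lt_of_le_of_ne (by have := hc₁nn v; have := hc₂nn v; simp [hc₀def]; linarith)
        (Ne.symm hv0)
    · rw [Finset.sum_filter_of_ne, hsum0]
      intro v _ h hc
      exact h (by rw [hc, zero_smul])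
  -- Step B : minimize the cardinality
  have hex : ∃ m, ∃ T, Q T ∧ T.card = m := by
    obtain ⟨T, hT⟩ := hQ0; exact ⟨T.card, T, hT, rfl⟩
  obtain ⟨T, hQT, hTcard⟩ := Nat.find_spec hex
  have hmin : ∀ T', Q T' → T.card ≤ T'.card := by
    intro T' hT'
    rw [hTcard]
    exact Nat.find_min' hex ⟨T', hT', rfl⟩
  obtain ⟨hTS, hTV, hTne, c, hcpos, hcrel⟩ := hQT
  -- Step C : every proper subfamily of T is linearly independent
  have hindep : ∀ w ∈ T, LinearIndependent ℝ (fun v : ↑(T.erase w) => toReal (↑v : Fin n → ℤ)) := by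
    intro w hw
    by_contra hni
    rw [Fintype.not_linearIndependent_iff] at hni
    obtain ⟨g, hg, v₀, hgv₀⟩ := hni
    -- core argument, applied to either g or -g
    have haux : ∀ d : (Fin n → ℤ) → ℝ, (∀ u, u ∉ T.erase w → d u = 0) →
        (∑ u ∈ T.erase w, d u • toReal u = 0) → (∃ u ∈ T.erase w, 0 < d u) → False := by
      intro d hd0 hdsum ⟨u₁, hu₁e, hu₁pos⟩
      have hdT : ∑ u ∈ T, d u • toReal u = 0 := by
        rw [← Finset.add_sum_erase T _ hw, hd0 w (Finset.notMem_erase w T), hdsum,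
          zero_smul, add_zero]
      set F := T.filter (fun u => 0 < d u) with hFdef
      have hFne : F.Nonempty :=
        ⟨u₁, Finset.mem_filter.mpr ⟨Finset.mem_of_mem_erase hu₁e, hu₁pos⟩⟩
      obtain ⟨u₀, hu₀F, hu₀min⟩ := Finset.exists_min_image F (fun u => c u / d u) hFne
      obtain ⟨hu₀T, hd₀⟩ := Finset.mem_filter.mp hu₀F
      set t := c u₀ / d u₀ with htdef
      have ht : 0 < t := div_pos (hcpos u₀ hu₀T) hd₀
      set c' : (Fin n → ℤ) → ℝ := fun u => c u - t * d u with hc'def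
      have hc'₀ : c' u₀ = 0 := by
        simp only [hc'def, htdef]
        rw [div_mul_cancel₀ _ (ne_of_gt hd₀), sub_self]
      have hc'nn : ∀ u ∈ T, 0 ≤ c' u := by
        intro u hu
        rcases le_or_gt (d u) 0 with h | h
        · have h2 := hcpos u hu
          simp only [hc'def]
          nlinarith
        · have huF : u ∈ F := Finset.mem_filter.mpr ⟨hu, h⟩
          have h3 := hu₀min u huF
          rw [le_div_iff₀ h] at h3
          simp only [hc'def]
          linarith
      have hc'w : 0 < c' w := by
        simp only [hc'def, hd0 w (Finset.notMem_erase w T), mul_zero, sub_zero]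
        exact hcpos w hw
      have h4 : ∑ u ∈ T, (t * d u) • toReal u = 0 := by
        have h5 : ∑ u ∈ T, (t * d u) • toReal u = t • ∑ u ∈ T, d u • toReal u := by
          rw [Finset.smul_sum]
          exact Finset.sum_congr rfl fun u _ => (smul_smul t (d u) (toReal u)).symm
        rw [h5, hdT, smul_zero]
      have hc'sum : ∑ u ∈ T, c' u • toReal u = 0 := by
        simp only [hc'def, sub_smul, Finset.sum_sub_distrib]
        rw [hcrel, h4, sub_zero]
      set T' := T.filter (fun u => c' u ≠ 0) with hT'def
      have hQT' : Q T' := by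
        refine ⟨(Finset.filter_subset _ _).trans hTS, ?_, ⟨w, ?_⟩, c', ?_, ?_⟩
        · intro v hv
          exact hTV v (Finset.filter_subset _ _ hv)
        · exact Finset.mem_filter.mpr ⟨hw, ne_of_gt hc'w⟩
        · intro v hv
          obtain ⟨hvT, hv0⟩ := Finset.mem_filter.mp hv
          exact lt_of_le_of_ne (hc'nn v hvT) (Ne.symm hv0)
        · rw [Finset.sum_filter_of_ne, hc'sum]
          intro v _ h hc
          exact h (by rw [hc, zero_smul])
      have hlt : T'.card < T.card := by
        refine Finset.card_lt_card ?_
        rw [Finset.ssubset_iff_of_subset (Finset.filter_subset _ _)]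
        exact ⟨u₀, hu₀T, by simp [hT'def, hc'₀]⟩
      exact absurd (hmin T' hQT') (not_le.mpr hlt)
    set d : (Fin n → ℤ) → ℝ := fun u => if h : u ∈ T.erase w then g ⟨u, h⟩ else 0 with hddef
    have hd0 : ∀ u, u ∉ T.erase w → d u = 0 := fun u hu => dif_neg hu
    have hdsum : ∑ u ∈ T.erase w, d u • toReal u = 0 := by
      rw [← Finset.sum_coe_sort (T.erase w) (fun u => d u • toReal u), ← hg]
      exact Finset.sum_congr rfl fun v _ => by rw [hddef]; simp [dif_pos v.2]
    have hdv₀ : d ↑v₀ = g v₀ := by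
      simp only [hddef, dif_pos v₀.2, Subtype.coe_eta]
    rcases lt_or_gt_of_ne hgv₀ with hneg | hposi
    · refine haux (fun u => -d u) (fun u hu => by simp [hd0 u hu]) ?_ ⟨↑v₀, v₀.2, ?_⟩
      · simp only [neg_smul, Finset.sum_neg_distrib, hdsum, neg_zero]
      · show 0 < -d ↑v₀
        rw [hdv₀]; linarith
    · exact haux d hd0 hdsum ⟨↑v₀, v₀.2, by rw [hdv₀]; exact hposi⟩
  -- the key uniqueness consequence of independence
  have key : ∀ w ∈ T, ∀ e : (Fin n → ℤ) → ℝ, (∑ u ∈ T, e u • toReal u = 0) →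
      e w = 0 → ∀ u ∈ T, e u = 0 := by
    intro w hw e herel hew u hu
    have hind := hindep w hw
    rw [Fintype.linearIndependent_iff] at hind
    have hsum : ∑ v : ↑(T.erase w), e (↑v : Fin n → ℤ) • toReal (↑v : Fin n → ℤ) = 0 := by
      rw [Finset.sum_coe_sort (T.erase w) (fun u => e u • toReal u)]
      rw [← Finset.add_sum_erase T _ hw, hew, zero_smul, zero_add] at herel
      exact herel
    have hz := hind (fun v => e ↑v) hsum
    rcases eq_or_ne u w with rfl | hne
    · exact hew
    · exact hz ⟨u, Finset.mem_erase.mpr ⟨hne, hu⟩⟩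
  -- Step D : T.card ≤ n
  obtain ⟨w₁, hw₁⟩ := hTne
  have hkn : T.card ≤ n := by
    have hind := hindep w₁ hw₁
    set u : ↑(T.erase w₁) → ↥V := fun v =>
      ⟨toReal (↑v : Fin n → ℤ), hTV ↑v (Finset.mem_of_mem_erase v.2)⟩ with hudef
    have hu : LinearIndependent ℝ u := by
      apply LinearIndependent.of_comp V.subtype
      exact hind
    have hcard1 : (T.erase w₁).card ≤ Module.finrank ℝ V := by
      have := hu.fintype_card_le_finrank
      simpa [Fintype.card_coe] using this
    have hcard2 : (T.erase w₁).card = T.card - 1 := Finset.card_erase_of_mem hw₁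
    have hc1 : 1 ≤ T.card := Finset.card_pos.mpr ⟨w₁, hw₁⟩
    omega
  -- Step E : rational relation
  have hc0 : ∃ v ∈ T, c v ≠ 0 := ⟨w₁, hw₁, ne_of_gt (hcpos w₁ hw₁)⟩
  obtain ⟨y, hy0, hyrel⟩ := exists_rat_relation T c hc0 hcrel
  set yh : (Fin n → ℤ) → ℚ := fun u => if h : u ∈ T then y ⟨u, h⟩ else 0 with hyhdef
  set z : (Fin n → ℤ) → ℝ := fun u => ((yh u : ℚ) : ℝ) with hzdef
  have hyhrel : ∀ i, ∑ u ∈ T, yh u * ((u i : ℤ) : ℚ) = 0 := by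
    intro i
    rw [← Finset.sum_coe_sort T (fun u => yh u * ((u i : ℤ) : ℚ)), ← hyrel i]
    exact Finset.sum_congr rfl fun v _ => by rw [hyhdef]; simp [dif_pos v.2]
  have hz0 : ∀ u, u ∉ T → z u = 0 := by
    intro u hu; simp [hzdef, hyhdef, dif_neg hu]
  have hzrel : ∑ u ∈ T, z u • toReal u = 0 := by
    funext i
    rw [Finset.sum_apply]
    simp only [Pi.smul_apply, smul_eq_mul, toReal, Pi.zero_apply, hzdef]
    have h2 : ((∑ u ∈ T, yh u * ((u i : ℤ) : ℚ) : ℚ) : ℝ) = 0 := by rw [hyhrel i]; norm_num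
    push_cast at h2
    exact h2
  have hall : ∀ u ∈ T, yh u ≠ 0 := by
    intro u hu h0
    have hzu : z u = 0 := by simp [hzdef, h0]
    have hz' := key u hu z hzrel hzu
    apply hy0
    funext v
    show y v = 0
    have h2 := hz' ↑v v.2
    have h3 : z ↑v = ((y v : ℚ) : ℝ) := by
      simp only [hzdef, hyhdef, dif_pos v.2, Subtype.coe_eta]
    rw [h3] at h2
    exact_mod_cast h2
  have hzw₁ : z w₁ ≠ 0 := by
    simp only [hzdef, ne_eq, Rat.cast_eq_zero]
    exact hall w₁ hw₁
  set t := c w₁ / z w₁ with htdef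
  set e : (Fin n → ℤ) → ℝ := fun u => c u - t * z u with hedef
  have he1 : e w₁ = 0 := by
    simp only [hedef, htdef]
    rw [div_mul_cancel₀ _ hzw₁, sub_self]
  have herel : ∑ u ∈ T, e u • toReal u = 0 := by
    have h4 : ∑ u ∈ T, (t * z u) • toReal u = 0 := by
      have h5 : ∑ u ∈ T, (t * z u) • toReal u = t • ∑ u ∈ T, z u • toReal u := by
        rw [Finset.smul_sum]
        exact Finset.sum_congr rfl fun u _ => (smul_smul t (z u) (toReal u)).symm
      rw [h5, hzrel, smul_zero]
    simp only [hedef, sub_smul, Finset.sum_sub_distrib]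
    rw [hcrel, h4, sub_zero]
  have hceq : ∀ u ∈ T, c u = t * z u := by
    intro u hu
    have h := key w₁ hw₁ e herel he1 u hu
    simp only [hedef] at h
    linarith
  have hsign : ∀ u ∈ T, 0 < yh u * yh w₁ := by
    intro u hu
    have h6 : 0 < z u * z w₁ := by
      have hcu := hcpos u hu
      have hcw := hcpos w₁ hw₁
      have e1 := hceq u hu
      have e2 := hceq w₁ hw₁
      nlinarith [mul_pos hcu hcw, sq_nonneg t]
    have h7 : ((yh u * yh w₁ : ℚ) : ℝ) = z u * z w₁ := by
      simp only [hzdef]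
      push_cast
      ring
    rw [← h7] at h6
    exact_mod_cast h6
  set q : (Fin n → ℤ) → ℚ := fun u => if 0 < yh w₁ then yh u else -yh u with hqdef
  have hqpos : ∀ u ∈ T, 0 < q u := by
    intro u hu
    have h8 := hsign u hu
    by_cases hp : 0 < yh w₁
    · simp only [hqdef, if_pos hp]
      nlinarith
    · have hneg : yh w₁ < 0 := lt_of_le_of_ne (not_lt.mp hp) (hall w₁ hw₁)
      simp only [hqdef, if_neg hp]
      nlinarith
  have hqrel : ∀ i, ∑ u ∈ T, q u * ((u i : ℤ) : ℚ) = 0 := by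
    intro i
    by_cases hp : 0 < yh w₁
    · simp only [hqdef, if_pos hp]
      exact hyhrel i
    · simp only [hqdef, if_neg hp, neg_mul, Finset.sum_neg_distrib, hyhrel i, neg_zero]
  set a : (Fin n → ℤ) → ℤ := fun u => (q u).num * ∏ x ∈ T.erase u, ((q x).den : ℤ) with hadef
  have hapos : ∀ u ∈ T, 0 < a u := by
    intro u hu
    refine mul_pos (Rat.num_pos.mpr (hqpos u hu)) ?_
    exact Finset.prod_pos fun x _ => Int.natCast_pos.mpr (q x).pos
  have hacast : ∀ u ∈ T, (a u : ℚ) = q u * ∏ x ∈ T, ((q x).den : ℚ) := by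
    intro u hu
    have hden : ((q u).den : ℚ) ≠ 0 := by
      exact_mod_cast (q u).den_nz
    have hnum : ((q u).num : ℚ) = q u * ((q u).den : ℚ) := by
      exact (Rat.mul_den_eq_num (q u)).symm
    rw [← Finset.mul_prod_erase T (fun x => ((q x).den : ℚ)) hu]
    simp only [hadef]
    push_cast
    rw [hnum]
    ring
  have harel : ∑ u ∈ T, a u • u = (0 : Fin n → ℤ) := by
    funext i
    rw [Finset.sum_apply]
    simp only [Pi.smul_apply, smul_eq_mul, Pi.zero_apply]
    have h9 : ((∑ u ∈ T, a u * u i : ℤ) : ℚ) = 0 := by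
      push_cast
      calc ∑ u ∈ T, ((a u : ℚ)) * ((u i : ℤ) : ℚ)
          = ∑ u ∈ T, (q u * ((u i : ℤ) : ℚ)) * ∏ x ∈ T, ((q x).den : ℚ) := by
            refine Finset.sum_congr rfl fun u hu => ?_
            rw [hacast u hu]; ring
        _ = (∑ u ∈ T, q u * ((u i : ℤ) : ℚ)) * ∏ x ∈ T, ((q x).den : ℚ) := by
            rw [Finset.sum_mul]
        _ = 0 := by rw [hqrel i, zero_mul]
    exact_mod_cast h9
  have hcard_eq : Fintype.card ↑T = T.card := Fintype.card_coe T
  set eqv : Fin T.card ≃ ↑T := (Fintype.equivFinOfCardEq hcard_eq).symm with heqv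
  refine ⟨T.card, fun i => ↑(eqv i), fun i => a ↑(eqv i), Finset.card_pos.mpr ⟨w₁, hw₁⟩,
    hkn, Subtype.val_injective.comp eqv.injective, fun i => hTS (eqv i).2,
    fun i => hapos ↑(eqv i) (eqv i).2, ?_⟩
  have h10 : ∑ i : Fin T.card, a ↑(eqv i) • ((eqv i : Fin n → ℤ))
      = ∑ v : ↑T, a ↑v • ((v : Fin n → ℤ)) := Equiv.sum_comp eqv (fun v : ↑T => a ↑v • (↑v : Fin n → ℤ))
  rw [h10, Finset.sum_coe_sort T (fun u => a u • u), harel]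
end

section
/- Let S be a finite set of nonzero vectors in ℤ^n (n ≥ 1) such that every vector of ℝ^n is a nonnegative real linear combination of elements of S (i.e., S positively spans ℝ^n; this is the completeness of the fan). If S is 'general', then there exist exactly n + 1 distinct elements v_1, …, v_{n+1} ∈ S and positive integers a_1, …, a_{n+1} such that a_1 v_1 + ⋯ + a_{n+1} v_{n+1} = 0. (Combinatorial version, for 'general' sets, of Batyrev's Proposition 3.6: on a complete toric n-fold there is a primitive relation with trivial focus, and 'generality' forces it to involve exactly n + 1 generators.) -/

private lemma clear_denoms {k n : ℕ} (w : Fin k → (Fin n → ℤ)) (h : Fin k → ℚ)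
    (hpos : ∀ i, 0 < h i) (hsum : ∀ j, ∑ i, h i * (w i j : ℚ) = 0) :
    ∃ a : Fin k → ℤ, (∀ i, 0 < a i) ∧ ∑ i, a i • w i = 0 := by
  set N : ℤ := ∏ i, ((h i).den : ℤ) with hN
  have hNpos : 0 < N := Finset.prod_pos fun i _ => by exact_mod_cast (h i).den_pos
  have hdvd : ∀ i, ((h i).den : ℤ) ∣ N := fun i => Finset.dvd_prod_of_mem _ (Finset.mem_univ i)
  have key : ∀ i, (((h i).num * (N / ((h i).den : ℤ)) : ℤ) : ℚ) = (N : ℚ) * h i := by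
    intro i
    obtain ⟨c, hc⟩ := hdvd i
    rw [hc, Int.mul_ediv_cancel_left _ (by exact_mod_cast (h i).den_pos.ne')]
    push_cast
    rw [mul_comm (((h i).den:ℚ) * (c:ℚ)) (h i), ← mul_assoc, Rat.mul_den_eq_num]
  refine ⟨fun i => (h i).num * (N / ((h i).den : ℤ)), ?_, ?_⟩
  · intro i
    have : (0 : ℚ) < (((h i).num * (N / ((h i).den : ℤ)) : ℤ) : ℚ) := by
      rw [key i]
      have : (0:ℚ) < (N:ℚ) := by exact_mod_cast hNpos
      exact mul_pos this (hpos i)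
    exact_mod_cast this
  · funext j
    have : ((∑ i, ((h i).num * (N / ((h i).den : ℤ))) • w i) j : ℚ) = 0 := by
      push_cast [Finset.sum_apply, Pi.smul_apply, smul_eq_mul]
      have key' : ∀ i, ((h i).num : ℚ) * ((N / ((h i).den:ℤ) : ℤ) : ℚ) = (N:ℚ) * h i := by
        intro i; have := key i; push_cast at this ⊢; linarith
      calc ∑ i, ((h i).num : ℚ) * ((N / ((h i).den:ℤ) : ℤ) : ℚ) * (w i j : ℚ)
          = (N:ℚ) * ∑ i, h i * (w i j : ℚ) := by
            rw [Finset.mul_sum]; exact Finset.sum_congr rfl fun i _ => by rw [key' i]; ring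
        _ = 0 := by rw [hsum j, mul_zero]
    have h0 : ((∑ i, ((h i).num * (N / ((h i).den : ℤ))) • w i) j : ℚ) = ((0:ℤ):ℚ) := by
      simpa using this
    simpa using Int.cast_injective (α := ℚ) h0


private lemma reduce (n : ℕ) : ∀ m : ℕ, ∀ T : Finset (Fin n → ℤ), T.card ≤ m → T.Nonempty →
    ∀ g : (Fin n → ℤ) → ℚ, (∀ v ∈ T, 0 < g v) → (∀ j, ∑ v ∈ T, g v * (v j : ℚ) = 0) →
    ∃ T' : Finset (Fin n → ℤ), T' ⊆ T ∧ T'.Nonempty ∧ T'.card ≤ n + 1 ∧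
      ∃ g' : (Fin n → ℤ) → ℚ, (∀ v ∈ T', 0 < g' v) ∧ (∀ j, ∑ v ∈ T', g' v * (v j : ℚ) = 0) := by
  intro m
  induction m with
  | zero => intro T hc hne; exact absurd (Finset.card_pos.mpr hne) (by omega)
  | succ m ih =>
    intro T hcard hne g hg hsum
    by_cases hle : T.card ≤ n + 1
    · exact ⟨T, le_refl _, hne, hle, g, hg, hsum⟩
    push_neg at hle
    -- build the linear map
    let W : ↥T → (Fin n → ℚ) := fun v j => ((v : Fin n → ℤ) j : ℚ)
    let L : (↥T → ℚ) →ₗ[ℚ] (Fin n → ℚ) :=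
      { toFun := fun c => ∑ v, c v • W v
        map_add' := by intro x y; simp [add_smul, Finset.sum_add_distrib]
        map_smul' := by intro r x; simp [smul_smul, Finset.smul_sum]
      }
    have hL : ∀ c : ↥T → ℚ, ∀ j, L c j = ∑ v : ↥T, c v * ((v : Fin n → ℤ) j : ℚ) := by
      intro c j
      show (∑ v : ↥T, c v • W v) j = _
      simp [Finset.sum_apply, W]
    have hrank : 2 ≤ Module.finrank ℚ ↥(LinearMap.ker L) := by
      have h1 := LinearMap.finrank_range_add_finrank_ker L
      have h2 : Module.finrank ℚ (↥T → ℚ) = T.card := by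
        rw [Module.finrank_pi]; simp
      have h3 : Module.finrank ℚ ↥(LinearMap.range L) ≤ n := by
        have := Submodule.finrank_le (LinearMap.range L)
        rwa [Module.finrank_pi, Fintype.card_fin] at this
      omega
    -- aT in kernel
    let aT : ↥T → ℚ := fun v => g v
    have haT : aT ∈ LinearMap.ker L := by
      rw [LinearMap.mem_ker]
      funext j
      rw [hL]
      simp only [Pi.zero_apply]
      exact (Finset.sum_coe_sort T (fun v => g v * (v j : ℚ))).trans (hsum j)
    have main : ∀ b' : ↥T → ℚ, b' ∈ LinearMap.ker L → b' ∉ Submodule.span ℚ ({aT} : Set (↥T → ℚ)) →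
        (∃ v : ↥T, 0 < b' v) → ∃ T' : Finset (Fin n → ℤ), T' ⊆ T ∧ T'.Nonempty ∧ T'.card ≤ n + 1 ∧
        ∃ g' : (Fin n → ℤ) → ℚ, (∀ v ∈ T', 0 < g' v) ∧ (∀ j, ∑ v ∈ T', g' v * (v j : ℚ) = 0) := by
      intro b hbker hbspan hpos
      let B : (Fin n → ℤ) → ℚ := fun v => if h : v ∈ T then b ⟨v, h⟩ else 0
      have hBb : ∀ v : ↥T, B ↑v = b v := fun v => by simp [B, v.2]
      have hBsum : ∀ j, ∑ v ∈ T, B v * (v j : ℚ) = 0 := by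
        intro j
        rw [← Finset.sum_coe_sort T (fun v => B v * (v j : ℚ))]
        have hLb : L b j = 0 := by rw [LinearMap.mem_ker.mp hbker]; rfl
        rw [hL] at hLb
        rw [← hLb]
        exact Finset.sum_congr rfl fun v _ => by rw [hBb v]
      obtain ⟨w0, hw0⟩ := hpos
      have hfilne : (T.filter (fun v => 0 < B v)).Nonempty :=
        ⟨w0, Finset.mem_filter.mpr ⟨w0.2, by rw [hBb w0]; exact hw0⟩⟩
      obtain ⟨v0, hv0mem, hv0min⟩ := Finset.exists_min_image (T.filter (fun v => 0 < B v))
        (fun v => g v / B v) hfilne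
      obtain ⟨hv0T, hv0B⟩ := Finset.mem_filter.mp hv0mem
      -- new coefficients
      let g' : (Fin n → ℤ) → ℚ := fun v => B v0 * g v - g v0 * B v
      have hg'nonneg : ∀ v ∈ T, 0 ≤ g' v := by
        intro v hv
        by_cases hBv : 0 < B v
        · have := hv0min v (Finset.mem_filter.mpr ⟨hv, hBv⟩)
          have h1 : g v0 * B v ≤ g v * B v0 := by
            rw [div_le_div_iff₀ hv0B hBv] at this
            linarith
          simp only [g', sub_nonneg]; linarith
        · push_neg at hBv
          have h1 : 0 < B v0 * g v := mul_pos hv0B (hg v hv)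
          have h2 : g v0 * B v ≤ 0 := mul_nonpos_of_nonneg_of_nonpos (hg v0 hv0T).le hBv
          simp only [g', sub_nonneg]; linarith
      have hg'v0 : g' v0 = 0 := by simp [g']; ring
      have hg'ne : ∃ v ∈ T, g' v ≠ 0 := by
        by_contra hcon
        push_neg at hcon
        apply hbspan
        have : b = (B v0 / g v0) • aT := by
          funext v
          have := hcon v v.2
          have hgv : 0 < g (↑v : Fin n → ℤ) := hg v v.2
          simp only [g', sub_eq_zero] at this
          have hgv0 : 0 < g v0 := hg v0 hv0T
          have : B ↑v = (B v0 / g v0) * g ↑v := by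
            rw [div_mul_eq_mul_div, eq_div_iff hgv0.ne']
            linarith [this]
          rw [← hBb v] at *
          simp only [Pi.smul_apply, smul_eq_mul]
          rw [this]
        rw [this]
        exact Submodule.smul_mem _ _ (Submodule.mem_span_singleton_self aT)
      obtain ⟨w1, hw1T, hw1ne⟩ := hg'ne
      let T' := T.filter (fun v => 0 < g' v)
      have hT'sub : T' ⊆ T := Finset.filter_subset _ _
      have hw1pos : 0 < g' w1 := lt_of_le_of_ne (hg'nonneg w1 hw1T) (Ne.symm hw1ne)
      have hT'ne : T'.Nonempty := ⟨w1, Finset.mem_filter.mpr ⟨hw1T, hw1pos⟩⟩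
      have hv0not : v0 ∉ T' := fun h => by
        have := (Finset.mem_filter.mp h).2
        rw [hg'v0] at this
        exact lt_irrefl 0 this
      have hT'card : T'.card ≤ m := by
        have h1 : T'.card < T.card := Finset.card_lt_card
          (Finset.ssubset_iff_of_subset hT'sub |>.mpr ⟨v0, hv0T, hv0not⟩)
        omega
      have hg'sum : ∀ j, ∑ v ∈ T', g' v * (v j : ℚ) = 0 := by
        intro j
        have heq : ∑ v ∈ T', g' v * (v j : ℚ) = ∑ v ∈ T, g' v * (v j : ℚ) := by
          apply Finset.sum_subset hT'sub
          intro v hv hnv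
          have h0 : g' v = 0 := by
            rcases lt_or_eq_of_le (hg'nonneg v hv) with h | h
            · exact absurd (Finset.mem_filter.mpr ⟨hv, h⟩) hnv
            · exact h.symm
          rw [h0, zero_mul]
        rw [heq]
        have : ∑ v ∈ T, g' v * (v j : ℚ) =
            B v0 * (∑ v ∈ T, g v * (v j : ℚ)) - g v0 * (∑ v ∈ T, B v * (v j : ℚ)) := by
          rw [Finset.mul_sum, Finset.mul_sum, ← Finset.sum_sub_distrib]
          exact Finset.sum_congr rfl fun v _ => by simp only [g']; ring
        rw [this, hsum j, hBsum j, mul_zero, mul_zero, sub_zero]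
      obtain ⟨T'', hsub'', hrest⟩ := ih T' hT'card hT'ne g' (fun v hv => (Finset.mem_filter.mp hv).2) hg'sum
      exact ⟨T'', hsub''.trans hT'sub, hrest⟩
    have hnotle : ¬ (LinearMap.ker L ≤ Submodule.span ℚ {aT}) := by
      intro hcon
      have h4 : Module.finrank ℚ ↥(Submodule.span ℚ ({aT} : Set (↥T → ℚ))) ≤ 1 := by
        have := finrank_span_le_card (R := ℚ) ({aT} : Set (↥T → ℚ))
        simpa using this
      have h5 := Submodule.finrank_mono hcon
      omega
    obtain ⟨b, hbker, hbspan⟩ := SetLike.not_le_iff_exists.mp hnotle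
    clear hnotle
    have hb0 : b ≠ 0 := fun h => hbspan (h ▸ Submodule.zero_mem _)
    by_cases hBpos : ∃ v : ↥T, 0 < b v
    · exact main b hbker hbspan hBpos
    · push_neg at hBpos
      apply main (-b)
      · exact Submodule.neg_mem _ hbker
      · intro hcon
        apply hbspan
        have := Submodule.neg_mem _ hcon
        simpa using this
      · obtain ⟨v, hv⟩ := Function.ne_iff.mp hb0
        exact ⟨v, by simp; exact lt_of_le_of_ne (hBpos v) hv⟩

private lemma rationalize (n : ℕ) (S : Finset (Fin n → ℤ)) (d : (Fin n → ℤ) → ℝ)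
    (hd1 : ∀ v ∈ S, 1 ≤ d v) (hdsum : ∀ j, ∑ v ∈ S, d v * (v j : ℝ) = 0) :
    ∃ g : (Fin n → ℤ) → ℚ, (∀ v ∈ S, 0 < g v) ∧ (∀ j, ∑ v ∈ S, g v * (v j : ℚ) = 0) := by
  classical
  set ι := {x // x ∈ S}
  set dd : ι → ℝ := fun v => d ↑v with hdd
  set V : Submodule ℚ ℝ := Submodule.span ℚ (Set.range dd) with hV
  haveI : FiniteDimensional ℚ V := FiniteDimensional.span_of_finite ℚ (Set.finite_range dd)
  set N := Module.finrank ℚ V with hN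
  set bb : Module.Basis (Fin N) ℚ V := Module.finBasis ℚ V with hbb
  set dv : ι → V := fun v => ⟨dd v, Submodule.subset_span (Set.mem_range_self v)⟩ with hdv
  set r : ι → Fin N → ℚ := fun v i => bb.repr (dv v) i with hr
  have hrepr : ∀ v : ι, dd v = ∑ i, (r v i : ℝ) * ((bb i : ℝ)) := by
    intro v
    have h1 := bb.sum_repr (dv v)
    have h2 := congrArg (Subtype.val : V → ℝ) h1
    rw [show ((dv v : V) : ℝ) = dd v from rfl] at h2
    rw [← h2]
    push_cast [Rat.smul_def]
    rfl
  have hkey : ∀ (i : Fin N) (j : Fin n), ∑ v : ι, r v i * ((v : Fin n → ℤ) j : ℚ) = 0 := by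
    intro i j
    set q : Fin N → ℚ := fun i' => ∑ v : ι, r v i' * ((v : Fin n → ℤ) j : ℚ) with hq
    have hz : (∑ i', q i' • bb i') = (0 : V) := by
      have hcoe : ((∑ i', q i' • bb i' : V) : ℝ) = 0 := by
        push_cast [Rat.smul_def]
        have step1 : ∀ i' : Fin N, ((q i' : ℝ)) * (bb i' : ℝ)
            = ∑ v : ι, (r v i' : ℝ) * (((v : Fin n → ℤ)) j : ℝ) * (bb i' : ℝ) := by
          intro i'
          rw [hq]
          push_cast
          rw [Finset.sum_mul]
        calc ∑ i', (q i' : ℝ) * (bb i' : ℝ)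
            = ∑ i', ∑ v : ι, (r v i' : ℝ) * (((v : Fin n → ℤ)) j : ℝ) * (bb i' : ℝ) :=
              Finset.sum_congr rfl fun i' _ => step1 i'
          _ = ∑ v : ι, ∑ i', (r v i' : ℝ) * (((v : Fin n → ℤ)) j : ℝ) * (bb i' : ℝ) :=
              Finset.sum_comm
          _ = ∑ v : ι, dd v * (((v : Fin n → ℤ)) j : ℝ) := by
              refine Finset.sum_congr rfl fun v _ => ?_
              rw [hrepr v, Finset.sum_mul]
              exact Finset.sum_congr rfl fun i' _ => by ring
          _ = ∑ v ∈ S, d v * ((v j : ℤ) : ℝ) :=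
              Finset.sum_coe_sort S (fun v => d v * ((v j : ℤ) : ℝ))
          _ = 0 := hdsum j
      exact (Submodule.coe_eq_zero).mp hcoe
    have h3 := bb.repr_sum_self q
    rw [hz] at h3
    have h4 : q = 0 := by rw [← h3]; simp
    exact congrFun h4 i
  -- approximation
  set M : ℚ := (∑ v : ι, ∑ i, |r v i|) + 1 with hM
  have hM1 : 1 ≤ M := by
    rw [hM]
    have : (0:ℚ) ≤ ∑ v : ι, ∑ i, |r v i| :=
      Finset.sum_nonneg fun v _ => Finset.sum_nonneg fun i _ => abs_nonneg _
    linarith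
  have hMpos : (0:ℝ) < (M : ℚ) := by exact_mod_cast lt_of_lt_of_le one_pos hM1
  have hex : ∀ i : Fin N, ∃ qi : ℚ, |(bb i : ℝ) - (qi : ℝ)| < 1 / (M : ℝ) := by
    intro i
    exact exists_rat_near (bb i : ℝ) (by positivity)
  choose qq hqq using hex
  set g0 : ι → ℚ := fun v => ∑ i, r v i * qq i with hg0
  have hg0pos : ∀ v : ι, 0 < g0 v := by
    intro v
    have hcast : ((g0 v : ℚ) : ℝ) = ∑ i, (r v i : ℝ) * (qq i : ℝ) := by
      rw [hg0]; push_cast; rfl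
    have hdiff : |dd v - (g0 v : ℝ)| < 1 := by
      have h1 : dd v - (g0 v : ℝ) = ∑ i, (r v i : ℝ) * ((bb i : ℝ) - (qq i : ℝ)) := by
        rw [hcast, hrepr v, ← Finset.sum_sub_distrib]
        exact Finset.sum_congr rfl fun i _ => by ring
      rw [h1]
      calc |∑ i, (r v i : ℝ) * ((bb i : ℝ) - (qq i : ℝ))|
          ≤ ∑ i, |(r v i : ℝ) * ((bb i : ℝ) - (qq i : ℝ))| := Finset.abs_sum_le_sum_abs _ _
        _ ≤ ∑ i, |(r v i : ℝ)| * (1 / (M:ℝ)) := by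
            refine Finset.sum_le_sum fun i _ => ?_
            rw [abs_mul]
            exact mul_le_mul_of_nonneg_left (hqq i).le (abs_nonneg _)
        _ = (∑ i, |(r v i : ℝ)|) * (1 / (M:ℝ)) := (Finset.sum_mul _ _ _).symm
        _ < 1 := by
            rw [mul_one_div, div_lt_one hMpos]
            have hle : (∑ i, |r v i|) ≤ M - 1 := by
              have h5 := Finset.single_le_sum (f := fun v : ι => ∑ i, |r v i|)
                (fun v _ => Finset.sum_nonneg fun i _ => abs_nonneg _) (Finset.mem_univ v)
              rw [hM]
              linarith
            have h6 : ((∑ i, |r v i| : ℚ) : ℝ) ≤ (M : ℝ) - 1 := by exact_mod_cast hle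
            push_cast at h6
            linarith
    have hdd1 : 1 ≤ dd v := hd1 v v.2
    have : (0:ℝ) < (g0 v : ℝ) := by
      have := abs_lt.mp hdiff
      linarith
    exact_mod_cast this
  have hg0sum : ∀ j, ∑ v : ι, g0 v * ((v : Fin n → ℤ) j : ℚ) = 0 := by
    intro j
    calc ∑ v : ι, g0 v * ((v : Fin n → ℤ) j : ℚ)
        = ∑ v : ι, ∑ i, qq i * (r v i * ((v : Fin n → ℤ) j : ℚ)) := by
          refine Finset.sum_congr rfl fun v _ => ?_
          rw [hg0, Finset.sum_mul]
          exact Finset.sum_congr rfl fun i _ => by ring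
      _ = ∑ i, qq i * ∑ v : ι, (r v i * ((v : Fin n → ℤ) j : ℚ)) := by
          rw [Finset.sum_comm]
          exact Finset.sum_congr rfl fun i _ => (Finset.mul_sum _ _ _).symm
      _ = 0 := by
          refine Finset.sum_eq_zero fun i _ => ?_
          rw [hkey i j, mul_zero]
  refine ⟨fun w => if h : w ∈ S then g0 ⟨w, h⟩ else 0, ?_, ?_⟩
  · intro v hv
    simpa [hv] using hg0pos ⟨v, hv⟩
  · intro j
    rw [← Finset.sum_coe_sort S (fun v => (if h : v ∈ S then g0 ⟨v, h⟩ else 0) * (v j : ℚ))]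
    rw [← hg0sum j]
    refine Finset.sum_congr rfl fun v _ => ?_
    simp [v.2]


private lemma index_finset {n k : ℕ} (T : Finset (Fin n → ℤ)) (hk : T.card = k)
    (g : (Fin n → ℤ) → ℚ) (hg : ∀ v ∈ T, 0 < g v) (hsum : ∀ j, ∑ v ∈ T, g v * (v j : ℚ) = 0) :
    ∃ (v : Fin k → (Fin n → ℤ)) (a : Fin k → ℤ),
      Function.Injective v ∧ (∀ i, v i ∈ T) ∧ (∀ i, 0 < a i) ∧ ∑ i, a i • v i = 0 := by
  let e : ↥T ≃ Fin k := T.equivFinOfCardEq hk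
  let v : Fin k → (Fin n → ℤ) := fun i => ↑(e.symm i)
  have hvinj : Function.Injective v := fun i i' h =>
    e.symm.injective (Subtype.val_injective h)
  have hvT : ∀ i, v i ∈ T := fun i => (e.symm i).2
  have hvsum : ∀ j, ∑ i, g (v i) * (v i j : ℚ) = 0 := by
    intro j
    have h1 : ∑ i, g (v i) * (v i j : ℚ) = ∑ x : ↥T, g ↑x * ((x : Fin n → ℤ) j : ℚ) :=
      Equiv.sum_comp e.symm (fun x : ↥T => g ↑x * ((x : Fin n → ℤ) j : ℚ))
    rw [h1, Finset.sum_coe_sort T (fun w => g w * (w j : ℚ))]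
    exact hsum j
  obtain ⟨a, hapos, hasum⟩ := clear_denoms v (fun i => g (v i))
    (fun i => hg (v i) (hvT i)) hvsum
  exact ⟨v, a, hvinj, hvT, hapos, hasum⟩

/-- Let `S` be a finite set of nonzero vectors in `ℤ^n` (`n ≥ 1`) which positively spans
`ℝ^n`.  If `S` is *general*, then there exist exactly `n + 1` distinct elements
`v 0, …, v n` of `S` and positive integers `a 0, …, a n` with `∑ i, a i • v i = 0`. -/
theorem general_complete_relation (n : ℕ) (hn : 1 ≤ n) (S : Finset (Fin n → ℤ))
    (hnz : ∀ v ∈ S, v ≠ 0)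
    (hspan : ∀ x : Fin n → ℝ, ∃ c : (Fin n → ℤ) → ℝ,
      (∀ v, 0 ≤ c v) ∧ x = ∑ v ∈ S, c v • toReal v)
    (hgen : ¬ IsSpecial n S) :
    ∃ (v : Fin (n + 1) → (Fin n → ℤ)) (a : Fin (n + 1) → ℤ),
      Function.Injective v ∧ (∀ i, v i ∈ S) ∧ (∀ i, 0 < a i) ∧
      ∑ i, a i • v i = 0 := by
  classical
  have hSne : S.Nonempty := by
    by_contra hcon
    rw [Finset.not_nonempty_iff_eq_empty] at hcon
    obtain ⟨c, hc0, hx⟩ := hspan (fun _ => 1)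
    rw [hcon, Finset.sum_empty] at hx
    have := congrFun hx ⟨0, hn⟩
    norm_num at this
  obtain ⟨c, hc0, hx⟩ := hspan (-(∑ v ∈ S, toReal v))
  set d : (Fin n → ℤ) → ℝ := fun v => c v + 1 with hd
  have hd1 : ∀ v ∈ S, 1 ≤ d v := fun v _ => by
    simp only [hd]; linarith [hc0 v]
  have hdsum : ∀ j, ∑ v ∈ S, d v * (v j : ℝ) = 0 := by
    intro j
    have h1 : ∑ v ∈ S, d v • toReal v = 0 := by
      simp only [hd, add_smul, one_smul, Finset.sum_add_distrib]
      rw [← hx]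
      exact neg_add_cancel _
    have h2 := congrFun h1 j
    simpa [toReal, Finset.sum_apply] using h2
  obtain ⟨g, hgpos, hgsum⟩ := rationalize n S d hd1 hdsum
  obtain ⟨T', hT'S, hT'ne, hT'card, g', hg'pos, hg'sum⟩ :=
    reduce n S.card S le_rfl hSne g hgpos hgsum
  have hk1 : 1 ≤ T'.card := Finset.card_pos.mpr hT'ne
  by_cases hle : T'.card ≤ n
  · exfalso
    apply hgen
    obtain ⟨v, a, hvinj, hvT, hapos, hasum⟩ := index_finset T' rfl g' hg'pos hg'sum
    exact ⟨T'.card, v, a, hk1, hle, hvinj, fun i => hT'S (hvT i), hapos, hasum⟩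
  · have hkeq : T'.card = n + 1 := by omega
    obtain ⟨v, a, hvinj, hvT, hapos, hasum⟩ := index_finset T' hkeq g' hg'pos hg'sum
    exact ⟨v, a, hvinj, fun i => hT'S (hvT i), hapos, hasum⟩
end

section
/- Let v_1, …, v_{n+1} ∈ ℤ^n (n ≥ 1) be such that every n-element subset of {v_1, …, v_{n+1}} is a ℤ-basis of ℤ^n. Suppose there exist positive integers a_1, …, a_{n+1} with a_1 v_1 + ⋯ + a_{n+1} v_{n+1} = 0. Then a_1 = a_2 = ⋯ = a_{n+1}, and consequently v_1 + v_2 + ⋯ + v_{n+1} = 0. (This is the combinatorial content of the remark that a primitive collection of length n + 1 with trivial focus on a smooth complete toric n-fold forces the fan to be that of ℙ^n.) -/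
/-- Let `v 0, …, v n ∈ ℤ^n` (`n ≥ 1`) be vectors such that every `n`-element subset of
them generates `ℤ^n` as a `ℤ`-module (i.e. is a `ℤ`-basis of `ℤ^n`).  If there are
positive integers `a 0, …, a n` with `∑ i, a i • v i = 0`, then all the `a i` are equal
and `∑ i, v i = 0`. -/
theorem positive_relation_of_unimodular (n : ℕ) (hn : 1 ≤ n)
    (v : Fin (n + 1) → (Fin n → ℤ))
    (hbasis : ∀ j : Fin (n + 1),
      Submodule.span ℤ (Set.range fun i : Fin n => v (j.succAbove i)) = ⊤)
    (a : Fin (n + 1) → ℤ) (hpos : ∀ i, 0 < a i)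
    (hrel : ∑ i, a i • v i = 0) :
    (∀ i j : Fin (n + 1), a i = a j) ∧ ∑ i, v i = 0 := by
  -- linear independence of each n-subset
  have hinj : ∀ j : Fin (n + 1), ∀ c : Fin n → ℤ,
      ∑ i, c i • v (j.succAbove i) = 0 → ∀ i, c i = 0 := by
    intro j
    have hsurj : Function.Surjective
        (Fintype.linearCombination ℤ (fun i : Fin n => v (j.succAbove i))) := by
      rw [← LinearMap.range_eq_top, Fintype.range_linearCombination, hbasis j]
    have hi := OrzechProperty.injective_of_surjective_endomorphism _ hsurj
    intro c hc i
    have : c = 0 := by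
      apply hi
      rw [map_zero, Fintype.linearCombination_apply, hc]
    simp [this]
  -- divisibility
  have hdvd : ∀ j : Fin (n + 1), ∀ i : Fin n, a j ∣ a (j.succAbove i) := by
    intro j
    have hv : v j ∈ Submodule.span ℤ (Set.range fun i : Fin n => v (j.succAbove i)) := by
      rw [hbasis j]; trivial
    rw [Submodule.mem_span_range_iff_exists_fun] at hv
    obtain ⟨c, hc⟩ := hv
    have hsum : ∑ i, (a j * c i + a (j.succAbove i)) • v (j.succAbove i) = 0 := by
      have := Fin.sum_univ_succAbove (fun i => a i • v i) j
      rw [hrel] at this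
      have hc' : a j • v j = ∑ i, (a j * c i) • v (j.succAbove i) := by
        rw [← hc, Finset.smul_sum]
        simp [mul_smul]
      calc ∑ i, (a j * c i + a (j.succAbove i)) • v (j.succAbove i)
          = ∑ i, (a j * c i) • v (j.succAbove i)
            + ∑ i, a (j.succAbove i) • v (j.succAbove i) := by
            rw [← Finset.sum_add_distrib]; simp [add_smul]
        _ = a j • v j + ∑ i, a (j.succAbove i) • v (j.succAbove i) := by rw [hc']
        _ = 0 := this.symm
    intro i
    have := hinj j _ hsum i
    exact ⟨-c i, by linarith⟩
  have hdvd' : ∀ i j : Fin (n + 1), i ≠ j → a i ∣ a j := by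
    intro i j hij
    obtain ⟨k, hk⟩ := Fin.exists_succAbove_eq (Ne.symm hij)
    rw [← hk]; exact hdvd i k
  have heq : ∀ i j : Fin (n + 1), a i = a j := by
    intro i j
    rcases eq_or_ne i j with h | h
    · rw [h]
    · exact Int.dvd_antisymm (hpos i).le (hpos j).le (hdvd' i j h) (hdvd' j i h.symm)
  refine ⟨heq, ?_⟩
  have h0 : a 0 • ∑ i, v i = 0 := by
    rw [Finset.smul_sum, ← hrel]
    exact Finset.sum_congr rfl fun i _ => by rw [heq 0 i]
  rcases smul_eq_zero.mp h0 with h | h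
  · exact absurd h (hpos 0).ne'
  · exact h
end

section
/- Let m ≥ 4 and let v_1, …, v_m ∈ ℤ² be pairwise distinct nonzero vectors such that, with indices taken modulo m, det(v_i, v_{i+1}) = 1 for every i, the two-dimensional cones σ_i = { s·v_i + t·v_{i+1} : s, t ≥ 0 } cover ℝ², and the interiors of distinct σ_i are pairwise disjoint (i.e., the v_i are the ray generators of a complete nonsingular fan in ℝ² with at least 4 rays). Then there exist indices i ≠ j with v_i = −v_j. (This is the combinatorial content of the claim in the introduction that every smooth projective toric surface other than ℙ² admits a surjective toric morphism to ℙ¹, hence carries a nontrivial nef line bundle that is not big.) -/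
/-- The determinant `u₁ w₂ - u₂ w₁` of two vectors in `ℤ²`. -/
def det2 (u w : ℤ × ℤ) : ℤ := u.1 * w.2 - u.2 * w.1

/-- The canonical map `ℤ² → ℝ²`. -/
def toR2 (u : ℤ × ℤ) : ℝ × ℝ := ((u.1 : ℝ), (u.2 : ℝ))

/-- The cone in `ℝ²` spanned by (the real images of) two integer vectors. -/
def cone2 (u w : ℤ × ℤ) : Set (ℝ × ℝ) :=
  {x | ∃ s t : ℝ, 0 ≤ s ∧ 0 ≤ t ∧ x = s • toR2 u + t • toR2 w}

namespace FanAux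


lemma det2_anti (u w : ℤ × ℤ) : det2 u w = - det2 w u := by simp [det2]; ring

lemma det2_self (u : ℤ × ℤ) : det2 u u = 0 := by simp [det2]; ring

lemma det2_neg_left (u w : ℤ × ℤ) : det2 (-u) w = - det2 u w := by simp [det2]; ring

lemma det2_neg_right (u w : ℤ × ℤ) : det2 u (-w) = - det2 u w := by simp [det2]; ring

lemma det2_smul_left (a : ℤ) (u y : ℤ × ℤ) : det2 (a • u) y = a * det2 u y := by
  simp [det2, Prod.smul_def, smul_eq_mul]; ring

lemma det2_combo_right (a b : ℤ) (y u w : ℤ × ℤ) :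
    det2 y (a • u + b • w) = a * det2 y u + b * det2 y w := by
  simp [det2, Prod.smul_def, smul_eq_mul]; ring

lemma det2_combo_left (a b : ℤ) (u w y : ℤ × ℤ) :
    det2 (a • u + b • w) y = a * det2 u y + b * det2 w y := by
  simp [det2, Prod.smul_def, smul_eq_mul]; ring

/-- Cramer's rule in `ℤ²` for a unimodular pair. -/
lemma cramer_int (u w x : ℤ × ℤ) (h : det2 u w = 1) :
    x = det2 x w • u + det2 u x • w := by
  have h' : u.1 * w.2 - u.2 * w.1 = 1 := h
  ext
  · simp only [det2, Prod.fst_add, Prod.smul_fst, smul_eq_mul]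
    linear_combination (-x.1) * h'
  · simp only [det2, Prod.snd_add, Prod.smul_snd, smul_eq_mul]
    linear_combination (-x.2) * h'

/-- If `u` is part of a unimodular pair and `x` is parallel to `u`, then `x` is an
integer multiple of `u`. -/
lemma parallel_of_det_zero (u w x : ℤ × ℤ) (h : det2 u w = 1) (h0 : det2 u x = 0) :
    ∃ k : ℤ, x = k • u := by
  have hcop : IsCoprime u.1 u.2 := ⟨w.2, -w.1, by simp [det2] at h; ring_nf; linarith⟩
  have h0' : u.1 * x.2 = u.2 * x.1 := by simp [det2] at h0; linarith
  rcases eq_or_ne u.1 0 with h1 | h1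
  · -- u.1 = 0, so u.2 is a unit
    have hu2 : IsUnit u.2 := by
      rw [h1] at hcop; exact (isCoprime_zero_left).mp hcop
    rcases Int.isUnit_iff.mp hu2 with h2 | h2
    · refine ⟨x.2, ?_⟩
      have : x.1 = 0 := by rw [h1, h2] at h0'; simpa using h0'.symm
      ext <;> simp [Prod.smul_def, smul_eq_mul, h1, h2, this]
    · refine ⟨-x.2, ?_⟩
      have : x.1 = 0 := by rw [h1, h2] at h0'; simp at h0'; linarith
      ext <;> simp [Prod.smul_def, smul_eq_mul, h1, h2, this]
  · have hdvd : u.1 ∣ x.1 := by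
      have : u.1 ∣ u.2 * x.1 := ⟨x.2, by linarith⟩
      exact (IsCoprime.dvd_of_dvd_mul_left hcop this)
    rcases hdvd with ⟨k, hk⟩
    refine ⟨k, ?_⟩
    have hx2 : x.2 = k * u.2 := by
      have := h0'
      rw [hk] at this
      have := mul_left_cancel₀ h1 (by linarith : u.1 * x.2 = u.1 * (u.2 * k))
      linarith
    ext <;> simp [Prod.smul_def, smul_eq_mul, hk, hx2] <;> ring




noncomputable def det2R (x y : ℝ × ℝ) : ℝ := x.1 * y.2 - x.2 * y.1

lemma det2R_toR2 (u w : ℤ × ℤ) : det2R (toR2 u) (toR2 w) = (det2 u w : ℝ) := by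
  simp [det2R, toR2, det2]

lemma det2R_self (x : ℝ × ℝ) : det2R x x = 0 := by simp [det2R]; ring

lemma det2R_comboR_left (a b : ℝ) (u w y : ℝ × ℝ) :
    det2R (a • u + b • w) y = a * det2R u y + b * det2R w y := by
  simp [det2R, Prod.smul_def, smul_eq_mul]; ring

lemma det2R_comboR_right (a b : ℝ) (y u w : ℝ × ℝ) :
    det2R y (a • u + b • w) = a * det2R y u + b * det2R y w := by
  simp [det2R, Prod.smul_def, smul_eq_mul]; ring

/-- The "open sector" determined by an ordered pair of integer vectors. -/
def sector (u w : ℤ × ℤ) : Set (ℝ × ℝ) :=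
  {x | 0 < det2R (toR2 u) x ∧ 0 < det2R x (toR2 w)}

lemma isOpen_sector (u w : ℤ × ℤ) : IsOpen (sector u w) := by
  apply IsOpen.inter
  · exact isOpen_lt continuous_const
      (Continuous.sub (continuous_const.mul continuous_snd) (continuous_const.mul continuous_fst))
  · exact isOpen_lt continuous_const
      (Continuous.sub (continuous_fst.mul continuous_const) (continuous_snd.mul continuous_const))

lemma cramerR (u w x : ℝ × ℝ) (h : det2R u w = 1) :
    x = det2R x w • u + det2R u x • w := by
  have h' : u.1 * w.2 - u.2 * w.1 = 1 := h
  ext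
  · simp only [det2R, Prod.fst_add, Prod.smul_fst, smul_eq_mul]
    linear_combination (-x.1) * h'
  · simp only [det2R, Prod.snd_add, Prod.smul_snd, smul_eq_mul]
    linear_combination (-x.2) * h'

lemma sector_subset_interior (u w : ℤ × ℤ) (h : det2 u w = 1) :
    sector u w ⊆ interior (cone2 u w) := by
  apply interior_maximal _ (isOpen_sector u w)
  rintro x ⟨h1, h2⟩
  refine ⟨det2R x (toR2 w), det2R (toR2 u) x, le_of_lt h2, le_of_lt h1, ?_⟩
  exact cramerR _ _ _ (by rw [det2R_toR2, h]; norm_num)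


open Fin.CommRing in
set_option maxHeartbeats 1000000 in
lemma main_core (m : ℕ) (hm : 4 ≤ m) [NeZero m] (v : Fin m → ℤ × ℤ)
    (F1 : ∀ s t : Fin m, det2 (v s) (v t) = 0 → s = t)
    (F2 : ∀ i : Fin m, det2 (v i) (v (i + 1)) = 1)
    (F3 : ∀ i k : Fin m, ¬(0 < det2 (v i) (v k) ∧ 0 < det2 (v k) (v (i + 1))))
    (F4 : ∀ s t u : Fin m, 0 < det2 (v s) (v t) → det2 (v s) (v (t + 1)) < 0 →
        0 < det2 (v s) (v u) → det2 (v s) (v (u + 1)) < 0 → t = u)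
    (F5 : ∀ s : Fin m, ∃ j : Fin m, 0 ≤ det2 (v s) (v j) ∧ det2 (v s) (v (j + 1)) ≤ 0) :
    False := by
  -- basic Fin m facts
  have hvone : (1 : Fin m).val = 1 := by
    rw [Fin.val_one']; exact Nat.mod_eq_of_lt (by omega)
  have hvcast : ∀ k : ℕ, k < m → ((k : Fin m)).val = k := by
    intro k hk; rw [Fin.val_natCast]; exact Nat.mod_eq_of_lt hk
  have hι_lt : ∀ s t : Fin m, (t - s).val < m := fun s t => (t - s).isLt
  have hι_zero : ∀ s t : Fin m, (t - s).val = 0 ↔ t = s := by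
    intro s t
    constructor
    · intro h
      have h2 : t - s = 0 := Fin.ext (by simpa using h)
      exact sub_eq_zero.mp h2
    · intro h; rw [h]; simp
  have hoff : ∀ s t : Fin m, s + (((t - s).val : ℕ) : Fin m) = t := by
    intro s t
    rw [Fin.cast_val_eq_self]
    ring
  have hι_add : ∀ (s : Fin m) (k : ℕ), k < m → ((s + (k : Fin m)) - s).val = k := by
    intro s k hk
    rw [show s + (k : Fin m) - s = (k : Fin m) from by ring]
    exact hvcast k hk
  have hne_s : ∀ (s : Fin m) (k : ℕ), 1 ≤ k → k ≤ m - 1 → s + (k : Fin m) ≠ s := by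
    intro s k h1 h2 h
    have h0 : (k : Fin m) = 0 := add_eq_left.mp h
    have h3 := congrArg Fin.val h0
    rw [hvcast k (by omega)] at h3
    simp at h3
    omega
  have hval_succ : ∀ x : Fin m, x + 1 ≠ 0 → (x + 1).val = x.val + 1 := by
    intro x hx
    have h0 : (x + 1).val = (x.val + 1) % m := by
      rw [Fin.add_def, hvone]
    rcases Nat.lt_or_ge (x.val + 1) m with h | h
    · rw [h0, Nat.mod_eq_of_lt h]
    · exfalso; apply hx
      apply Fin.ext
      have hxl : x.val < m := x.isLt
      rw [h0, show x.val + 1 = m by omega, Nat.mod_self]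
      simp
  -- strengthened F5 and choice of N
  have F5' : ∀ s : Fin m, ∃ j : Fin m, 0 < det2 (v s) (v j) ∧ det2 (v s) (v (j + 1)) < 0 := by
    intro s
    obtain ⟨j, h1, h2⟩ := F5 s
    have hjs : j ≠ s := by
      intro h; rw [h, F2 s] at h2; omega
    have hj1s : j + 1 ≠ s := by
      intro h
      have hF := F2 j
      rw [h] at hF
      have : det2 (v s) (v j) = -1 := by
        rw [det2_anti] at hF ⊢; omega
      omega
    have e1 : det2 (v s) (v j) ≠ 0 := fun e => hjs (F1 s j e).symm
    have e2 : det2 (v s) (v (j + 1)) ≠ 0 := fun e => hj1s (F1 s (j + 1) e).symm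
    exact ⟨j, by omega, by omega⟩
  choose N hN1 hN2 using F5'
  have hNs : ∀ s, N s ≠ s := by
    intro s e
    have h := hN1 s
    rw [e, det2_self] at h
    omega
  -- walk lemmas
  have up : ∀ (s : Fin m) (k : ℕ), 1 ≤ k → k ≤ (N s - s).val → 0 < det2 (v s) (v (s + (k : Fin m))) := by
    intro s k
    induction k with
    | zero => omega
    | succ k ih =>
      intro h1 h2
      have hKm : (N s - s).val ≤ m - 1 := by have := hι_lt s (N s); omega
      rcases Nat.eq_or_lt_of_le h1 with hk0 | hk1
      · -- k = 0 : base case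
        have hz : k = 0 := by omega
        subst hz
        rw [show ((1 : ℕ) : Fin m) = 1 from Nat.cast_one]
        rw [F2 s]; omega
      · have hk : 1 ≤ k := by omega
        have pos := ih hk (by omega)
        have hcast : s + ((k + 1 : ℕ) : Fin m) = (s + (k : Fin m)) + 1 := by
          rw [Nat.cast_add_one]; ring
        rw [hcast]
        set t := s + (k : Fin m) with htdef
        have htNs : t ≠ N s := by
          intro e
          have hv : (t - s).val = k := hι_add s k (by omega)
          rw [e] at hv
          omega
        have ht1s : t + 1 ≠ s := by
          rw [htdef, ← hcast]
          exact hne_s s (k + 1) (by omega) (by omega)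
        rcases lt_trichotomy (det2 (v s) (v (t + 1))) 0 with h | h | h
        · exact absurd (F4 s t (N s) pos h (hN1 s) (hN2 s)) htNs
        · exact absurd (F1 s (t + 1) h).symm ht1s
        · exact h
  have down : ∀ (s : Fin m) (k : ℕ), (N s - s).val < k → k ≤ m - 1 →
      det2 (v s) (v (s + (k : Fin m))) < 0 := by
    intro s k
    induction k with
    | zero => omega
    | succ k ih =>
      intro h1 h2
      have hK1 : 1 ≤ (N s - s).val := by
        have hne : (N s - s).val ≠ 0 := fun h => hNs s ((hι_zero s (N s)).mp h)
        omega
      rcases Nat.lt_or_ge (N s - s).val k with h | h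
      · -- inductive step
        have neg := ih h (by omega)
        have hcast : s + ((k + 1 : ℕ) : Fin m) = (s + (k : Fin m)) + 1 := by
          rw [Nat.cast_add_one]; ring
        rw [hcast]
        set t := s + (k : Fin m) with htdef
        have ht1s : t + 1 ≠ s := by
          rw [htdef, ← hcast]
          exact hne_s s (k + 1) (by omega) (by omega)
        have h3 := F3 t s
        have h4 : 0 < det2 (v t) (v s) := by
          rw [det2_anti]; omega
        have h5 : ¬ (0 < det2 (v s) (v (t + 1))) := fun hh => h3 ⟨h4, hh⟩
        have h6 : det2 (v s) (v (t + 1)) ≠ 0 := fun e => ht1s (F1 s (t + 1) e).symm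
        omega
      · -- base case : k = (N s - s).val
        have hk : k = (N s - s).val := by omega
        have hb : s + ((k + 1 : ℕ) : Fin m) = N s + 1 := by
          rw [Nat.cast_add_one, ← add_assoc, hk, hoff]
        rw [hb]
        exact hN2 s
  have dpos : ∀ s t : Fin m, t ≠ s → (t - s).val ≤ (N s - s).val → 0 < det2 (v s) (v t) := by
    intro s t h1 h2
    have hk1 : 1 ≤ (t - s).val := by
      have hne : (t - s).val ≠ 0 := fun h => h1 ((hι_zero s t).mp h)
      omega
    have h := up s ((t - s).val) hk1 h2
    rwa [hoff] at h
  have dneg : ∀ s t : Fin m, (N s - s).val < (t - s).val → det2 (v s) (v t) < 0 := by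
    intro s t h
    have h1 : (t - s).val ≤ m - 1 := by have := hι_lt s t; omega
    have h2 := down s ((t - s).val) h h1
    rwa [hoff] at h2
  have hcross : ∀ s t : Fin m, 0 < det2 (v s) (v t) → (t - s).val ≤ (N s - s).val := by
    intro s t h
    by_contra hc
    have := dneg s t (by omega)
    omega
  -- Cramer decompositions of the antipodes
  have key : ∀ s : Fin m, (- v s) =
      det2 (- v s) (v (N s + 1)) • v (N s) + det2 (v (N s)) (- v s) • v (N s + 1) :=
    fun s => cramer_int _ _ _ (F2 (N s))
  have ha : ∀ s : Fin m, 1 ≤ det2 (- v s) (v (N s + 1)) := by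
    intro s
    rw [det2_neg_left]
    have := hN2 s
    omega
  have hb : ∀ s : Fin m, 1 ≤ det2 (v (N s)) (- v s) := by
    intro s
    rw [det2_neg_right]
    have h1 := hN1 s
    have h2 := det2_anti (v (N s)) (v s)
    omega
  -- the dichotomy: either a "jump" at s, or N is locally constant
  have dich : ∀ s : Fin m, N s = s + 1 ∨ N (s + 1) = N s := by
    intro s
    by_cases hj : N s = s + 1
    · exact Or.inl hj
    right
    have heq : det2 (v (s+1)) (- v s)
        = det2 (- v s) (v (N s + 1)) * det2 (v (s+1)) (v (N s))
        + det2 (v (N s)) (- v s) * det2 (v (s+1)) (v (N s + 1)) := by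
      conv_lhs => rw [key s]
      rw [det2_combo_right]
    have hL : det2 (v (s+1)) (- v s) = 1 := by
      rw [det2_neg_right]
      have h1 := det2_anti (v (s+1)) (v s)
      have h2 := F2 s
      omega
    rw [hL] at heq
    have hA := ha s
    have hB := hb s
    have hD1ne : det2 (v (s+1)) (v (N s)) ≠ 0 :=
      fun e => hj ((F1 (s+1) (N s) e).symm)
    have hD2ne : det2 (v (s+1)) (v (N s + 1)) ≠ 0 := by
      intro e
      have h3 := F1 (s+1) (N s + 1) e
      exact hNs s (add_right_cancel h3.symm)
    rcases lt_trichotomy (det2 (v (s+1)) (v (N s))) 0 with hD1 | hD1 | hD1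
    · exfalso
      have t1 : det2 (- v s) (v (N s + 1)) * det2 (v (s+1)) (v (N s)) ≤ -1 := by
        nlinarith [mul_nonneg (sub_nonneg.mpr hA)
          (by omega : (0:ℤ) ≤ -1 - det2 (v (s+1)) (v (N s)))]
      have hD2pos : 0 < det2 (v (s+1)) (v (N s + 1)) := by
        by_contra hc
        push_neg at hc
        have t2 : det2 (v (N s)) (- v s) * det2 (v (s+1)) (v (N s + 1)) ≤ 0 :=
          mul_nonpos_of_nonneg_of_nonpos (by omega) hc
        omega
      have hc2 := hcross (s+1) (N s + 1) hD2pos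
      have hc1 : (N (s+1) - (s+1)).val < (N s - (s+1)).val := by
        by_contra hc
        have := dpos (s+1) (N s) hj (by omega)
        omega
      have hx : (N s - (s+1)) + 1 ≠ 0 := by
        rw [show (N s - (s+1)) + 1 = N s - s from by ring]
        rw [sub_ne_zero]
        exact hNs s
      have he : (N s + 1 - (s+1)) = (N s - (s+1)) + 1 := by ring
      have hv2 : (N s + 1 - (s+1)).val = (N s - (s+1)).val + 1 := by
        rw [he]
        exact hval_succ _ hx
      omega
    · exact absurd hD1 hD1ne
    · have hD2neg : det2 (v (s+1)) (v (N s + 1)) < 0 := by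
        rcases lt_trichotomy (det2 (v (s+1)) (v (N s + 1))) 0 with h | h | h
        · exact h
        · exact absurd h hD2ne
        · exfalso
          nlinarith [mul_nonneg (sub_nonneg.mpr hA)
              (by omega : (0:ℤ) ≤ det2 (v (s+1)) (v (N s)) - 1),
            mul_nonneg (sub_nonneg.mpr hB)
              (by omega : (0:ℤ) ≤ det2 (v (s+1)) (v (N s + 1)) - 1)]
      exact (F4 (s+1) (N s) (N (s+1)) hD1 hD2neg (hN1 (s+1)) (hN2 (s+1))).symm
  -- two consecutive jumps are impossible (this is where m ≥ 4 is used)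
  have nopair : ∀ s : Fin m, N s = s + 1 → N (s + 1) = s + 1 + 1 → False := by
    intro s h1 h2
    have hA0 := ha s
    rw [h1] at hA0
    have k2 := key (s+1)
    rw [h2] at k2
    have hA1 := ha (s+1)
    rw [h2] at hA1
    have e1 : det2 (v s) (- v (s+1))
        = det2 (- v (s+1)) (v (s+1+1+1)) * det2 (v s) (v (s+1+1))
        + det2 (v (s+1+1)) (- v (s+1)) * det2 (v s) (v (s+1+1+1)) := by
      conv_lhs => rw [k2]
      rw [det2_combo_right]
    have hL1 : det2 (v s) (- v (s+1)) = -1 := by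
      rw [det2_neg_right, F2 s]
    have hB1 : det2 (v (s+1+1)) (- v (s+1)) = 1 := by
      rw [det2_neg_right]
      have h3 := det2_anti (v (s+1+1)) (v (s+1))
      have h4 := F2 (s+1)
      omega
    have hDs2 : det2 (v s) (v (s+1+1)) = - det2 (- v s) (v (s+1+1)) := by
      rw [det2_neg_left]; ring
    rw [hL1, hB1, hDs2] at e1
    have hge : 0 ≤ det2 (v s) (v (s+1+1+1)) := by
      nlinarith [mul_nonneg (sub_nonneg.mpr hA0) (sub_nonneg.mpr hA1)]
    have hval3 : ((s+1+1+1) - s).val = 3 := by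
      rw [show s+1+1+1 - s = ((3:ℕ) : Fin m) from by push_cast; ring]
      exact hvcast 3 (by omega)
    have hval1 : ((s+1) - s).val = 1 := by
      rw [show s+1 - s = ((1:ℕ) : Fin m) from by push_cast; ring]
      exact hvcast 1 (by omega)
    have hlt := dneg s (s+1+1+1) (by rw [h1, hval3, hval1]; omega)
    omega
  -- final case analysis
  by_cases hex : ∃ t : Fin m, N t = t + 1
  · obtain ⟨t, ht⟩ := hex
    have huniq : ∀ u : Fin m, N u = u + 1 → u = t := by
      intro u hu
      by_contra hne
      have h1 : u ≠ t + 1 := by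
        intro e; rw [e] at hu; exact nopair t ht hu
      have h2 : t ≠ u + 1 := by
        intro e; rw [e] at ht; exact nopair u hu ht
      have hval1t : ((t+1) - t).val = 1 := by
        rw [show t+1 - t = ((1:ℕ) : Fin m) from by push_cast; ring]
        exact hvcast 1 (by omega)
      have hval1u : ((u+1) - u).val = 1 := by
        rw [show u+1 - u = ((1:ℕ) : Fin m) from by push_cast; ring]
        exact hvcast 1 (by omega)
      have hιtu : 1 < (u - t).val := by
        have hne0 : (u - t).val ≠ 0 := fun h => hne ((hι_zero t u).mp h)
        have hne1 : (u - t).val ≠ 1 := by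
          intro h
          have h3 := hoff t u
          rw [h, Nat.cast_one] at h3
          exact h1 h3.symm
        omega
      have hιut : 1 < (t - u).val := by
        have hne0 : (t - u).val ≠ 0 := fun h => hne ((hι_zero u t).mp h).symm
        have hne1 : (t - u).val ≠ 1 := by
          intro h
          have h3 := hoff u t
          rw [h, Nat.cast_one] at h3
          exact h2 h3.symm
        omega
      have d1 : det2 (v t) (v u) < 0 := dneg t u (by rw [ht, hval1t]; omega)
      have d2 : det2 (v u) (v t) < 0 := dneg u t (by rw [hu, hval1u]; omega)
      have := det2_anti (v t) (v u)
      omega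
    have chain : ∀ k : ℕ, k ≤ m - 1 → N (t + 1 + (k : Fin m)) = N (t + 1) := by
      intro k
      induction k with
      | zero => intro _; simp
      | succ k ih =>
        intro hk
        have ihk := ih (by omega)
        have hstep : N ((t + 1 + (k : Fin m)) + 1) = N (t + 1 + (k : Fin m)) := by
          rcases dich (t + 1 + (k : Fin m)) with h | h
          · exfalso
            have heqt := huniq _ h
            have h4 : t + ((1 + k : ℕ) : Fin m) = t := by
              rw [Nat.cast_add, Nat.cast_one, ← add_assoc]
              exact heqt
            exact hne_s t (1 + k) (by omega) (by omega) h4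
          · exact h
        rw [show t + 1 + ((k+1 : ℕ) : Fin m) = (t + 1 + (k : Fin m)) + 1 from by
          rw [Nat.cast_add_one]; ring]
        rw [hstep, ihk]
    have hlast := chain (m - 1) le_rfl
    have hwrap : t + 1 + ((m - 1 : ℕ) : Fin m) = t := by
      have h0 : ((1 + (m-1) : ℕ) : Fin m) = 0 := by
        rw [show 1 + (m-1) = m by omega, Fin.natCast_self]
      calc t + 1 + ((m-1:ℕ) : Fin m)
          = t + (((1:ℕ) : Fin m) + ((m-1:ℕ) : Fin m)) := by rw [Nat.cast_one]; ring
        _ = t + ((1 + (m-1) : ℕ) : Fin m) := by rw [Nat.cast_add]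
        _ = t := by rw [h0, add_zero]
    rw [hwrap, ht] at hlast
    exact hNs (t+1) hlast.symm
  · push_neg at hex
    have hallstep : ∀ s, N (s + 1) = N s := fun s => (dich s).resolve_left (hex s)
    have const : ∀ k : ℕ, N ((k : Fin m)) = N 0 := by
      intro k
      induction k with
      | zero => simp
      | succ k ih => rw [Nat.cast_add_one, hallstep, ih]
    have hc : N (N 0) = N 0 := by
      have h := const (N 0).val
      rwa [Fin.cast_val_eq_self] at h
    exact hNs _ hc

end FanAux

open FanAux in
set_option maxHeartbeats 1000000 in
/-- Let `v 0, …, v (m-1)` (`m ≥ 4`) be the ray generators of a complete nonsingular fan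
in `ℝ²`: they are pairwise distinct nonzero vectors, consecutive pairs (indices mod `m`)
have determinant `1`, the two-dimensional cones `σ i = cone (v i) (v (i+1))` cover `ℝ²`,
and distinct such cones have disjoint interiors.  Then some ray generator is the
negative of another, i.e. there are `i ≠ j` with `v i = - v j`. -/
theorem smooth_complete_surface_fan_has_opposite_rays (m : ℕ) (hm : 4 ≤ m)
    (v : Fin m → ℤ × ℤ)
    (hinj : Function.Injective v) (hnz : ∀ i, v i ≠ 0)
    (hdet : ∀ i : Fin m, det2 (v i) (v (i + ⟨1, by omega⟩)) = 1)
    (hcover : ∀ x : ℝ × ℝ, ∃ i : Fin m, x ∈ cone2 (v i) (v (i + ⟨1, by omega⟩)))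
    (hdisj : ∀ i j : Fin m, i ≠ j →
      interior (cone2 (v i) (v (i + ⟨1, by omega⟩))) ∩
        interior (cone2 (v j) (v (j + ⟨1, by omega⟩))) = ∅) :
    ∃ i j : Fin m, i ≠ j ∧ v i = - v j := by
  by_contra hcon
  push_neg at hcon
  haveI : NeZero m := ⟨by omega⟩
  have hone : ∀ i : Fin m, i + (⟨1, by omega⟩ : Fin m) = i + 1 := by
    intro i
    congr 1
    apply Fin.ext
    rw [Fin.val_one']
    exact (Nat.mod_eq_of_lt (by omega)).symm
  have hdet' : ∀ i : Fin m, det2 (v i) (v (i + 1)) = 1 := by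
    intro i; rw [← hone i]; exact hdet i
  have hcover' : ∀ x : ℝ × ℝ, ∃ i : Fin m, x ∈ cone2 (v i) (v (i + 1)) := by
    intro x; obtain ⟨i, hi⟩ := hcover x; exact ⟨i, by rwa [hone i] at hi⟩
  have hdisj' : ∀ i j : Fin m, i ≠ j →
      interior (cone2 (v i) (v (i+1))) ∩ interior (cone2 (v j) (v (j+1))) = ∅ := by
    intro i j hij
    have h := hdisj i j hij
    rwa [hone i, hone j] at h
  have hopp : ∀ i j : Fin m, v i ≠ - v j := by
    intro i j
    rcases eq_or_ne i j with rfl | hne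
    · intro h
      apply hnz i
      have h1 := congrArg Prod.fst h
      have h2 := congrArg Prod.snd h
      simp only [Prod.fst_neg, Prod.snd_neg] at h1 h2
      have e1 : (v i).1 = 0 := by omega
      have e2 : (v i).2 = 0 := by omega
      rw [Prod.ext_iff]
      exact ⟨by simpa using e1, by simpa using e2⟩
    · exact hcon i j hne
  -- F1
  have F1 : ∀ s t : Fin m, det2 (v s) (v t) = 0 → s = t := by
    intro s t h0
    obtain ⟨k, hk⟩ := parallel_of_det_zero (v s) (v (s+1)) (v t) (hdet' s) h0
    have h1 : det2 (v t) (v (t+1)) = k * det2 (v s) (v (t+1)) := by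
      rw [hk, det2_smul_left]
    rw [hdet' t] at h1
    have hu : IsUnit k := IsUnit.of_mul_eq_one (det2 (v s) (v (t+1))) h1.symm
    rcases Int.isUnit_iff.mp hu with hk1 | hk1
    · subst hk1
      rw [one_smul] at hk
      exact (hinj hk).symm
    · subst hk1
      exfalso
      apply hopp t s
      rw [hk]
      ext <;> simp
  -- F3
  have F3 : ∀ i k : Fin m, ¬(0 < det2 (v i) (v k) ∧ 0 < det2 (v k) (v (i + 1))) := by
    rintro i k ⟨h1, h2⟩
    have hik : i ≠ k := by
      intro e
      rw [← e, det2_self] at h1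
      omega
    have hmem : toR2 (v k) ∈ sector (v i) (v (i+1)) := by
      constructor
      · rw [det2R_toR2]; exact_mod_cast h1
      · rw [det2R_toR2]; exact_mod_cast h2
    have hfc : Continuous (fun e : ℝ => toR2 (v k) + e • toR2 (v (k+1))) :=
      continuous_const.add (continuous_id.smul continuous_const)
    have hopen := (isOpen_sector (v i) (v (i+1))).preimage hfc
    have h0mem : (0:ℝ) ∈ (fun e : ℝ => toR2 (v k) + e • toR2 (v (k+1))) ⁻¹'
        sector (v i) (v (i+1)) := by
      simp only [Set.mem_preimage, zero_smul, add_zero]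
      exact hmem
    obtain ⟨δ, hδ, hball⟩ := Metric.isOpen_iff.mp hopen 0 h0mem
    have hballmem : (δ/2) ∈ Metric.ball (0:ℝ) δ := by
      rw [Metric.mem_ball, Real.dist_eq, sub_zero, abs_of_pos (by linarith)]
      linarith
    have hεmem := hball hballmem
    simp only [Set.mem_preimage] at hεmem
    have hεk : (toR2 (v k) + (δ/2) • toR2 (v (k+1))) ∈ sector (v k) (v (k+1)) := by
      constructor
      · have : det2R (toR2 (v k)) (toR2 (v k) + (δ/2) • toR2 (v (k+1)))
            = det2R (toR2 (v k)) (toR2 (v k)) + (δ/2) * det2R (toR2 (v k)) (toR2 (v (k+1))) := by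
          have := det2R_comboR_right 1 (δ/2) (toR2 (v k)) (toR2 (v k)) (toR2 (v (k+1)))
          rw [one_smul] at this
          rw [this]
          ring
        rw [this, det2R_self, det2R_toR2, hdet' k]
        push_cast
        linarith
      · have : det2R (toR2 (v k) + (δ/2) • toR2 (v (k+1))) (toR2 (v (k+1)))
            = det2R (toR2 (v k)) (toR2 (v (k+1))) + (δ/2) * det2R (toR2 (v (k+1))) (toR2 (v (k+1))) := by
          have := det2R_comboR_left 1 (δ/2) (toR2 (v k)) (toR2 (v (k+1))) (toR2 (v (k+1)))
          rw [one_smul] at this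
          rw [this]
          ring
        rw [this, det2R_self, det2R_toR2, hdet' k]
        push_cast
        linarith
    have hd := hdisj' i k hik
    have hmem2 : (toR2 (v k) + (δ/2) • toR2 (v (k+1))) ∈
        interior (cone2 (v i) (v (i+1))) ∩ interior (cone2 (v k) (v (k+1))) :=
      ⟨sector_subset_interior _ _ (hdet' i) hεmem, sector_subset_interior _ _ (hdet' k) hεk⟩
    rw [hd] at hmem2
    exact hmem2
  -- F4
  have F4 : ∀ s t u : Fin m, 0 < det2 (v s) (v t) → det2 (v s) (v (t + 1)) < 0 →
      0 < det2 (v s) (v u) → det2 (v s) (v (u + 1)) < 0 → t = u := by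
    intro s t u h1 h2 h3 h4
    by_contra hne
    have hmemt : toR2 (- v s) ∈ sector (v t) (v (t+1)) := by
      constructor
      · rw [det2R_toR2]
        have e1 : det2 (v t) (- v s) = det2 (v s) (v t) := by
          rw [det2_neg_right, det2_anti]; ring
        rw [e1]
        exact_mod_cast h1
      · rw [det2R_toR2]
        have e1 : det2 (- v s) (v (t+1)) = - det2 (v s) (v (t+1)) := by
          rw [det2_neg_left]
        rw [e1]
        have hc : (det2 (v s) (v (t+1)) : ℝ) < 0 := by exact_mod_cast h2
        push_cast
        linarith
    have hmemu : toR2 (- v s) ∈ sector (v u) (v (u+1)) := by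
      constructor
      · rw [det2R_toR2]
        have e1 : det2 (v u) (- v s) = det2 (v s) (v u) := by
          rw [det2_neg_right, det2_anti]; ring
        rw [e1]
        exact_mod_cast h3
      · rw [det2R_toR2]
        have e1 : det2 (- v s) (v (u+1)) = - det2 (v s) (v (u+1)) := by
          rw [det2_neg_left]
        rw [e1]
        have hc : (det2 (v s) (v (u+1)) : ℝ) < 0 := by exact_mod_cast h4
        push_cast
        linarith
    have hd := hdisj' t u hne
    have hmem2 : toR2 (- v s) ∈
        interior (cone2 (v t) (v (t+1))) ∩ interior (cone2 (v u) (v (u+1))) :=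
      ⟨sector_subset_interior _ _ (hdet' t) hmemt, sector_subset_interior _ _ (hdet' u) hmemu⟩
    rw [hd] at hmem2
    exact hmem2
  -- F5
  have F5 : ∀ s : Fin m, ∃ j : Fin m, 0 ≤ det2 (v s) (v j) ∧ det2 (v s) (v (j + 1)) ≤ 0 := by
    intro s
    obtain ⟨j, sc, tc, hsc, htc, hxeq⟩ := hcover' (toR2 (- v s))
    refine ⟨j, ?_, ?_⟩
    · have hcomp : det2R (toR2 (v j)) (toR2 (- v s)) = tc := by
        rw [hxeq, det2R_comboR_right, det2R_self, det2R_toR2, hdet' j]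
        ring
      have e1 : det2 (v j) (- v s) = det2 (v s) (v j) := by
        rw [det2_neg_right, det2_anti]; ring
      rw [det2R_toR2, e1] at hcomp
      have : (0:ℝ) ≤ (det2 (v s) (v j) : ℝ) := by rw [hcomp]; exact htc
      exact_mod_cast this
    · have hcomp : det2R (toR2 (- v s)) (toR2 (v (j+1))) = sc := by
        rw [hxeq, det2R_comboR_left, det2R_self, det2R_toR2, hdet' j]
        ring
      have e1 : det2 (- v s) (v (j+1)) = - det2 (v s) (v (j+1)) := by
        rw [det2_neg_left]
      rw [det2R_toR2, e1] at hcomp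
      have : (0:ℝ) ≤ -(det2 (v s) (v (j+1)) : ℝ) := by
        push_cast at hcomp ⊢
        rw [hcomp]
        exact hsc
      have : (0:ℤ) ≤ - det2 (v s) (v (j+1)) := by exact_mod_cast this
      omega
  exact main_core m hm v F1 hdet' F3 F4 F5
end

section
/- Let S be a finite set of nonzero vectors in ℤ^n and let σ_1, …, σ_N be pointed polyhedral cones in ℝ^n, each of which is the set of nonnegative real combinations of some finite subset of S, and whose union is all of ℝ^n. Let W ⊆ ℝ^n be a real linear subspace with 1 ≤ dim W ≤ n − 1, and suppose that for each i the intersection σ_i ∩ W is a face of σ_i. Then S is 'special': there exist k distinct elements v_1, …, v_k ∈ S with 1 ≤ k ≤ n and positive integers a_1, …, a_k such that a_1 v_1 + ⋯ + a_k v_k = 0. (This is a faithful combinatorial rendering of Proposition 1.7: for a proper surjective toric morphism f : X → Y with dim Y < dim X induced by a linear map with kernel W, each cone of the fan of X meets W in a face, the resulting fiber fan is complete in W, and hence X 'general' forces Y to be a point.) -/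
/-- The cone in `ℝ^n` generated by a finite set `T` of integer vectors: all nonnegative
real linear combinations of (the real images of) the elements of `T`. -/
def coneOf {n : ℕ} (T : Finset (Fin n → ℤ)) : Set (Fin n → ℝ) :=
  {x | ∃ c : (Fin n → ℤ) → ℝ, (∀ v, 0 ≤ c v) ∧ x = ∑ v ∈ T, c v • toReal v}

/-- Auxiliary: canonical map `ℤ^n → ℚ^n`. -/
def toRat {n : ℕ} (v : Fin n → ℤ) : Fin n → ℚ := fun i => (v i : ℚ)

lemma mem_coneOf {n : ℕ} {T : Finset (Fin n → ℤ)} {v : Fin n → ℤ} (hv : v ∈ T) :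
    toReal v ∈ coneOf T := by
  classical
  refine ⟨fun u => if u = v then 1 else 0, fun u => by by_cases h : u = v <;> simp [h], ?_⟩
  simp only [ite_smul, one_smul, zero_smul]
  rw [Finset.sum_ite_eq' T v (fun u => toReal u), if_pos hv]

/-- Rational linear independence of integer vectors implies real linear independence. -/
lemma li_real_of_li_rat {n : ℕ} {ι : Type*} [Fintype ι] (g : ι → (Fin n → ℤ))
    (h : LinearIndependent ℚ fun i => toRat (g i)) :
    LinearIndependent ℝ fun i => toReal (g i) := by
  classical
  set f : ι → (Fin n → ℚ) := fun i => toRat (g i) with hf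
  have hdual : ∀ j : ι, ∃ r : Fin n → ℚ, ∀ i : ι,
      ∑ t, r t * f i t = if i = j then 1 else 0 := by
    intro j
    set V := Submodule.span ℚ (Set.range f) with hV
    have hmem : ∀ i, f i ∈ V := fun i => Submodule.subset_span ⟨i, rfl⟩
    set b : Module.Basis ι ℚ V := Module.Basis.span h with hb
    obtain ⟨φ, hφ⟩ := LinearMap.exists_extend (b.coord j)
    refine ⟨fun t => φ (fun s => if t = s then 1 else 0), fun i => ?_⟩
    have h1 : φ (f i) = ∑ t, f i t * φ (fun s => if t = s then 1 else 0) := by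
      conv_lhs => rw [pi_eq_sum_univ (f i)]
      rw [map_sum]
      refine Finset.sum_congr rfl fun t _ => ?_
      rw [map_smul, smul_eq_mul]
    have h2 : φ (f i) = if i = j then 1 else 0 := by
      have hsub : f i = V.subtype ⟨f i, hmem i⟩ := rfl
      rw [hsub, ← LinearMap.comp_apply, hφ]
      have hbi : (⟨f i, hmem i⟩ : V) = b i := (Module.Basis.span_apply h i).symm
      rw [hbi, Module.Basis.coord_apply, Module.Basis.repr_self, Finsupp.single_apply]
    rw [← h2, h1]
    exact Finset.sum_congr rfl fun t _ => mul_comm _ _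
  choose r hr using hdual
  rw [Fintype.linearIndependent_iff]
  intro x hx j
  have key : ∀ i, ∑ t, (r j t : ℝ) * toReal (g i) t = if i = j then (1:ℝ) else 0 := by
    intro i
    calc ∑ t, (r j t : ℝ) * toReal (g i) t
        = ((∑ t, r j t * f i t : ℚ) : ℝ) := by
          simp only [toReal, hf, toRat]
          push_cast
          rfl
      _ = if i = j then (1:ℝ) else 0 := by
          rw [hr j i]; split_ifs <;> norm_num
  have hx' : ∀ t, ∑ i, x i * toReal (g i) t = 0 := by
    intro t
    have := congrFun hx t
    simpa [Finset.sum_apply] using this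
  have : ∑ t, (r j t : ℝ) * ∑ i, x i * toReal (g i) t = 0 := by
    simp only [hx', mul_zero, Finset.sum_const_zero]
  rw [show ∑ t, (r j t : ℝ) * ∑ i, x i * toReal (g i) t
      = ∑ i, x i * ∑ t, (r j t : ℝ) * toReal (g i) t by
    simp_rw [Finset.mul_sum]
    rw [Finset.sum_comm]
    exact Finset.sum_congr rfl fun i _ => Finset.sum_congr rfl fun t _ => by ring] at this
  simp only [key] at this
  simpa using this

/-- A good positive real dependency supported on a subset of `S` landing in `W`. -/
def GoodDep {n : ℕ} (S : Finset (Fin n → ℤ)) (W : Submodule ℝ (Fin n → ℝ))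
    (U : Finset (Fin n → ℤ)) : Prop :=
  U.Nonempty ∧ U ⊆ S ∧ (∀ v ∈ U, toReal v ∈ W) ∧
    ∃ c : (Fin n → ℤ) → ℝ, (∀ v ∈ U, 0 < c v) ∧ ∑ v ∈ U, c v • toReal v = 0

/-- Let `S` be a finite set of nonzero vectors in `ℤ^n` and let `σ 0, …, σ (N-1)` be
pointed cones, each generated by a finite subset of `S`, whose union is all of `ℝ^n`.
Let `W ⊆ ℝ^n` be a linear subspace with `1 ≤ dim W ≤ n - 1` such that each `σ i ∩ W`
is a face of `σ i` (cut out by a linear functional nonnegative on `σ i`).  Then `S`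
is *special*. -/
theorem special_of_fan_meeting_subspace_in_faces (n N : ℕ)
    (S : Finset (Fin n → ℤ)) (hnz : ∀ v ∈ S, v ≠ 0)
    (σ : Fin N → Set (Fin n → ℝ))
    (hgen : ∀ i, ∃ T : Finset (Fin n → ℤ), T ⊆ S ∧ σ i = coneOf T)
    (hpointed : ∀ i, ∀ x ∈ σ i, -x ∈ σ i → x = 0)
    (hcover : ∀ x : Fin n → ℝ, ∃ i, x ∈ σ i)
    (W : Submodule ℝ (Fin n → ℝ))
    (hdim₁ : 1 ≤ Module.finrank ℝ W) (hdim₂ : Module.finrank ℝ W ≤ n - 1)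
    (hface : ∀ i, ∃ ℓ : (Fin n → ℝ) →ₗ[ℝ] ℝ,
      (∀ x ∈ σ i, 0 ≤ ℓ x) ∧ σ i ∩ (W : Set (Fin n → ℝ)) = {x ∈ σ i | ℓ x = 0}) :
    IsSpecial n S := by
  classical
  have hn : 2 ≤ n := by have := le_trans hdim₁ hdim₂; omega
  obtain ⟨w, hwW, hw0⟩ := Submodule.exists_mem_ne_zero_of_ne_bot (p := W) (by
    intro h
    rw [h, finrank_bot] at hdim₁
    omega)
  -- face decomposition
  have decomp : ∀ x : Fin n → ℝ, x ∈ W → ∃ (U : Finset (Fin n → ℤ)) (c : (Fin n → ℤ) → ℝ),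
      U ⊆ S ∧ (∀ v ∈ U, toReal v ∈ W) ∧ (∀ v ∈ U, 0 < c v) ∧
      x = ∑ v ∈ U, c v • toReal v := by
    intro x hxW
    obtain ⟨i, hxσ⟩ := hcover x
    obtain ⟨T, hTS, hT⟩ := hgen i
    obtain ⟨ℓ, hℓpos, hℓface⟩ := hface i
    obtain ⟨c₀, hc₀, hxsum⟩ : x ∈ coneOf T := hT ▸ hxσ
    have hTσ : ∀ v ∈ T, toReal v ∈ σ i := fun v hv => hT ▸ mem_coneOf hv
    have hℓx : ℓ x = 0 := by
      have hx2 : x ∈ σ i ∩ (W : Set (Fin n → ℝ)) := ⟨hxσ, hxW⟩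
      rw [hℓface] at hx2
      exact hx2.2
    have hterm : ∀ v ∈ T, c₀ v * ℓ (toReal v) = 0 := by
      have hsum : ∑ v ∈ T, c₀ v * ℓ (toReal v) = 0 := by
        rw [← hℓx, hxsum, map_sum]
        exact Finset.sum_congr rfl fun v _ => by rw [map_smul, smul_eq_mul]
      exact fun v hv => (Finset.sum_eq_zero_iff_of_nonneg
        (fun u hu => mul_nonneg (hc₀ u) (hℓpos _ (hTσ u hu)))).mp hsum v hv
    refine ⟨T.filter (fun v => c₀ v ≠ 0), c₀, (Finset.filter_subset _ _).trans hTS, ?_, ?_, ?_⟩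
    · intro v hv
      rw [Finset.mem_filter] at hv
      have hℓv : ℓ (toReal v) = 0 := by
        rcases mul_eq_zero.mp (hterm v hv.1) with h | h
        · exact absurd h hv.2
        · exact h
      have hv2 : toReal v ∈ σ i ∩ (W : Set (Fin n → ℝ)) := by
        rw [hℓface]
        exact ⟨hTσ v hv.1, hℓv⟩
      exact hv2.2
    · intro v hv
      rw [Finset.mem_filter] at hv
      exact lt_of_le_of_ne (hc₀ v) (Ne.symm hv.2)
    · rw [hxsum]
      refine (Finset.sum_filter_of_ne ?_).symm
      intro v hv h hc
      exact h (by rw [hc, zero_smul])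
  obtain ⟨U₁, c₁, hU₁S, hU₁W, hc₁, hwsum⟩ := decomp w hwW
  obtain ⟨U₂, c₂, hU₂S, hU₂W, hc₂, hwsum'⟩ := decomp (-w) (W.neg_mem hwW)
  have hgood : GoodDep S W (U₁ ∪ U₂) := by
    have hU₁ne : U₁.Nonempty := by
      rcases U₁.eq_empty_or_nonempty with h | h
      · exact absurd (by rw [hwsum, h, Finset.sum_empty]) hw0
      · exact h
    refine ⟨hU₁ne.mono Finset.subset_union_left, Finset.union_subset hU₁S hU₂S, ?_,
      fun v => (if v ∈ U₁ then c₁ v else 0) + (if v ∈ U₂ then c₂ v else 0), ?_, ?_⟩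
    · intro v hv
      rcases Finset.mem_union.mp hv with h | h
      · exact hU₁W v h
      · exact hU₂W v h
    · intro v hv
      rcases Finset.mem_union.mp hv with h | h
      · exact add_pos_of_pos_of_nonneg (by rw [if_pos h]; exact hc₁ v h)
          (by split_ifs with h2; exacts [(hc₂ v h2).le, le_refl 0])
      · exact add_pos_of_nonneg_of_pos (by split_ifs with h2; exacts [(hc₁ v h2).le, le_refl 0])
          (by rw [if_pos h]; exact hc₂ v h)
    · have e1 : ∑ v ∈ U₁ ∪ U₂, (if v ∈ U₁ then c₁ v else 0) • toReal v
          = ∑ v ∈ U₁, c₁ v • toReal v := by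
        simp only [ite_smul, zero_smul]
        rw [Finset.sum_ite_mem, Finset.union_inter_cancel_left]
      have e2 : ∑ v ∈ U₁ ∪ U₂, (if v ∈ U₂ then c₂ v else 0) • toReal v
          = ∑ v ∈ U₂, c₂ v • toReal v := by
        simp only [ite_smul, zero_smul]
        rw [Finset.sum_ite_mem, Finset.union_inter_cancel_right]
      simp only [add_smul, Finset.sum_add_distrib, e1, e2, ← hwsum, ← hwsum']
      exact add_neg_cancel w
  have hex : ∃ k, ∃ U, GoodDep S W U ∧ U.card = k := ⟨_, _, hgood, rfl⟩
  obtain ⟨U, hU, hUcard⟩ := Nat.find_spec hex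
  have hmin : ∀ U', GoodDep S W U' → U.card ≤ U'.card := fun U' h => by
    rw [hUcard]; exact Nat.find_min' hex ⟨U', h, rfl⟩
  obtain ⟨hUne, hUS, hUW, c, hcpos, hcsum⟩ := hU
  -- uniqueness of the dependency up to scalar
  have uniq : ∀ b : (Fin n → ℤ) → ℝ, ∑ v ∈ U, b v • toReal v = 0 →
      ∃ t : ℝ, ∀ v ∈ U, b v = t * c v := by
    intro b hb
    obtain ⟨v₀, hv₀, hminim⟩ := U.exists_min_image (fun v => b v / c v) hUne
    set t := b v₀ / c v₀ with ht
    set d : (Fin n → ℤ) → ℝ := fun v => b v - t * c v with hd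
    have hd0 : ∀ v ∈ U, 0 ≤ d v := by
      intro v hv
      have h2 : t * c v ≤ b v := by
        rw [← le_div_iff₀ (hcpos v hv)]
        exact hminim v hv
      simpa [hd] using sub_nonneg.mpr h2
    have hdv₀ : d v₀ = 0 := by
      simp only [hd, ht]
      rw [div_mul_cancel₀ _ (ne_of_gt (hcpos v₀ hv₀)), sub_self]
    have hdsum : ∑ v ∈ U, d v • toReal v = 0 := by
      simp only [hd, sub_smul, mul_smul, Finset.sum_sub_distrib, hb, ← Finset.smul_sum,
        hcsum, smul_zero, sub_zero]
    by_cases hall : ∀ v ∈ U, d v = 0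
    · refine ⟨t, fun v hv => ?_⟩
      have := hall v hv
      simp only [hd] at this
      linarith [this]
    · exfalso
      push_neg at hall
      obtain ⟨u, huU, hdu⟩ := hall
      set U' := U.filter (fun v => d v ≠ 0) with hU'
      have hgood' : GoodDep S W U' := by
        refine ⟨⟨u, ?_⟩, (Finset.filter_subset _ _).trans hUS,
          fun v hv => hUW v (Finset.filter_subset _ _ hv), d, ?_, ?_⟩
        · rw [hU', Finset.mem_filter]; exact ⟨huU, hdu⟩
        · intro v hv
          rw [hU', Finset.mem_filter] at hv
          exact lt_of_le_of_ne (hd0 v hv.1) (Ne.symm hv.2)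
        · have heq : ∑ v ∈ U', d v • toReal v = ∑ v ∈ U, d v • toReal v := by
            rw [hU']
            refine Finset.sum_filter_of_ne ?_
            intro v hv h hc
            exact h (by rw [hc, zero_smul])
          rw [heq]
          exact hdsum
      have hlt : U'.card < U.card := Finset.card_lt_card (by
        rw [Finset.ssubset_iff_of_subset (Finset.filter_subset _ _)]
        exact ⟨v₀, hv₀, by simp [hU', Finset.mem_filter, hdv₀]⟩)
      exact absurd (hmin U' hgood') (not_le.mpr hlt)
  -- linear algebra on the subtype
  set c' : {v // v ∈ U} → ℝ := fun i => c i.val with hc'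
  set ψ : ({v // v ∈ U} → ℝ) →ₗ[ℝ] (Fin n → ℝ) :=
    Fintype.linearCombination ℝ (fun i : {v // v ∈ U} => toReal i.val) with hψ
  have hψapp : ∀ b : {v // v ∈ U} → ℝ, ψ b = ∑ i, b i • toReal i.val := fun b => rfl
  have hψc' : ψ c' = 0 := by
    rw [hψapp]
    rw [← Finset.sum_coe_sort U (fun v => c v • toReal v)] at hcsum
    exact hcsum
  have hc'ne : c' ≠ 0 := by
    obtain ⟨u, hu⟩ := hUne
    intro h
    exact absurd (congrFun h ⟨u, hu⟩) (ne_of_gt (hcpos u hu))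
  have hker : LinearMap.ker ψ = Submodule.span ℝ {c'} := by
    apply le_antisymm
    · intro b hb
      rw [LinearMap.mem_ker, hψapp] at hb
      set b' : (Fin n → ℤ) → ℝ := fun v => if h : v ∈ U then b ⟨v, h⟩ else 0 with hb'
      have hb'sum : ∑ v ∈ U, b' v • toReal v = 0 := by
        rw [← Finset.sum_coe_sort U (fun v => b' v • toReal v)]
        rw [show ∑ i : {v // v ∈ U}, b' i.val • toReal i.val = ∑ i, b i • toReal i.val from
          Finset.sum_congr rfl fun i _ => by simp [hb', i.2]]
        exact hb
      obtain ⟨t, htb⟩ := uniq b' hb'sum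
      rw [Submodule.mem_span_singleton]
      refine ⟨t, funext fun i => ?_⟩
      have := htb i.val i.2
      simp only [hb', dif_pos i.2] at this
      simp [hc', this]
    · rw [Submodule.span_le, Set.singleton_subset_iff]
      exact hψc'
  have hrange : LinearMap.range ψ ≤ W := by
    rintro x ⟨b, rfl⟩
    rw [hψapp]
    exact Submodule.sum_mem W (fun i _ => Submodule.smul_mem W _ (hUW i.val i.2))
  have hUcard_le : U.card ≤ n := by
    have hrn := LinearMap.finrank_range_add_finrank_ker ψ
    have hkr : Module.finrank ℝ (LinearMap.ker ψ) = 1 := by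
      rw [hker]; exact finrank_span_singleton hc'ne
    have hrr : Module.finrank ℝ (LinearMap.range ψ) ≤ n - 1 :=
      le_trans (Submodule.finrank_mono hrange) hdim₂
    rw [hkr, Module.finrank_pi, Fintype.card_coe] at hrn
    omega
  -- rational dependency
  have hnotli : ¬ LinearIndependent ℚ (fun i : {v // v ∈ U} => toRat i.val) := by
    intro h
    have hli := li_real_of_li_rat (fun i : {v // v ∈ U} => i.val) h
    rw [Fintype.linearIndependent_iff] at hli
    obtain ⟨u, hu⟩ := hUne
    exact absurd (hli c' (by rw [← hψapp]; exact hψc') ⟨u, hu⟩) (ne_of_gt (hcpos u hu))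
  rw [Fintype.not_linearIndependent_iff] at hnotli
  obtain ⟨q, hqsum, i₀, hqi₀⟩ := hnotli
  set bq : (Fin n → ℤ) → ℝ := fun v => if h : v ∈ U then (q ⟨v, h⟩ : ℝ) else 0 with hbq
  have hqsumℝ : ∑ i : {v // v ∈ U}, (q i : ℝ) • toReal i.val = 0 := by
    funext t
    have h1 := congrFun hqsum t
    simp only [Finset.sum_apply, Pi.smul_apply, smul_eq_mul, Pi.zero_apply, toRat] at h1
    have h2 := congrArg (fun x : ℚ => (x : ℝ)) h1
    push_cast at h2
    simpa [Finset.sum_apply, toReal] using h2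
  have hbqsum : ∑ v ∈ U, bq v • toReal v = 0 := by
    rw [← Finset.sum_coe_sort U (fun v => bq v • toReal v)]
    rw [show ∑ i : {v // v ∈ U}, bq i.val • toReal i.val
        = ∑ i : {v // v ∈ U}, (q i : ℝ) • toReal i.val from
      Finset.sum_congr rfl fun i _ => by simp [hbq, i.2]]
    exact hqsumℝ
  obtain ⟨t, htq⟩ := uniq bq hbqsum
  have hcast : ∀ i : {v // v ∈ U}, (q i : ℝ) = t * c i.val := by
    intro i
    have := htq i.val i.2
    simpa [hbq, dif_pos i.2] using this
  have htne : t ≠ 0 := by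
    intro h
    apply hqi₀
    have := hcast i₀
    rw [h, zero_mul] at this
    exact_mod_cast this
  have hq'' : ∃ q' : {v // v ∈ U} → ℚ, (∀ i, 0 < q' i) ∧
      ∑ i, q' i • toRat i.val = 0 := by
    rcases htne.lt_or_gt with hlt | hgt
    · refine ⟨-q, fun i => ?_, by
        simp only [Pi.neg_apply, neg_smul, Finset.sum_neg_distrib, hqsum, neg_zero]⟩
      have h1 : (0:ℝ) < -(q i : ℝ) := by
        rw [hcast i]
        nlinarith [hcpos i.val i.2]
      have : (0:ℝ) < ((-q i : ℚ) : ℝ) := by push_cast; exact h1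
      exact_mod_cast this
    · refine ⟨q, fun i => ?_, hqsum⟩
      have h1 : (0:ℝ) < (q i : ℝ) := by
        rw [hcast i]
        exact mul_pos hgt (hcpos i.val i.2)
      exact_mod_cast h1
  obtain ⟨q', hq'pos, hq'sum⟩ := hq''
  -- integerize
  set D : ℕ := ∏ i : {v // v ∈ U}, (q' i).den with hD
  have hDpos : 0 < D := Finset.prod_pos (fun i _ => (q' i).pos)
  set a : {v // v ∈ U} → ℤ := fun i => (q' i).num * ((D / (q' i).den : ℕ) : ℤ) with ha
  have hdvd : ∀ i : {v // v ∈ U}, (q' i).den ∣ D :=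
    fun i => Finset.dvd_prod_of_mem _ (Finset.mem_univ i)
  have hapos : ∀ i, 0 < a i := by
    intro i
    have h1 : 0 < (q' i).num := Rat.num_pos.mpr (hq'pos i)
    have h2 : 0 < D / (q' i).den := Nat.div_pos (Nat.le_of_dvd hDpos (hdvd i)) (q' i).pos
    exact mul_pos h1 (by exact_mod_cast h2)
  have haq : ∀ i, (a i : ℚ) = q' i * D := by
    intro i
    obtain ⟨m, hm⟩ := hdvd i
    have hdm : (D / (q' i).den : ℕ) = m := by
      rw [hm]; exact Nat.mul_div_cancel_left m (q' i).pos
    have ham : a i = (q' i).num * (m : ℤ) := by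
      show (q' i).num * ((D / (q' i).den : ℕ) : ℤ) = (q' i).num * (m : ℤ)
      rw [hdm]
    rw [ham, hm]
    push_cast
    rw [← mul_assoc, Rat.mul_den_eq_num]
  have hqa : ∑ i : {v // v ∈ U}, a i • i.val = 0 := by
    funext s
    have h1 : ∑ i : {v // v ∈ U}, q' i * ((i.val s : ℤ) : ℚ) = 0 := by
      have := congrFun hq'sum s
      simpa [Finset.sum_apply, smul_eq_mul, toRat] using this
    have h2 : ∑ i : {v // v ∈ U}, (a i : ℚ) * ((i.val s : ℤ) : ℚ) = 0 := by
      calc ∑ i : {v // v ∈ U}, (a i : ℚ) * ((i.val s : ℤ) : ℚ)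
          = ∑ i : {v // v ∈ U}, (D : ℚ) * (q' i * ((i.val s : ℤ) : ℚ)) := by
            exact Finset.sum_congr rfl fun i _ => by rw [haq i]; ring
        _ = (D : ℚ) * ∑ i : {v // v ∈ U}, q' i * ((i.val s : ℤ) : ℚ) := by
            rw [Finset.mul_sum]
        _ = 0 := by rw [h1, mul_zero]
    have h3 : ((∑ i : {v // v ∈ U}, a i * i.val s : ℤ) : ℚ) = 0 := by
      push_cast
      exact h2
    have h4 : ∑ i : {v // v ∈ U}, a i * i.val s = 0 := by exact_mod_cast h3
    simpa [Finset.sum_apply, Pi.smul_apply, smul_eq_mul] using h4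
  -- assemble
  have hcardpos : 1 ≤ U.card := Finset.card_pos.mpr hUne
  have hcardeq : Fintype.card {v // v ∈ U} = U.card := Fintype.card_coe U
  let e : Fin U.card ≃ {v // v ∈ U} := (Fintype.equivFinOfCardEq hcardeq).symm
  refine ⟨U.card, fun j => (e j).val, fun j => a (e j), hcardpos, hUcard_le,
    fun j₁ j₂ hj => e.injective (Subtype.val_injective hj),
    fun j => hUS (e j).2, fun j => hapos (e j), ?_⟩
  rw [show (∑ j, a (e j) • (e j).val) = ∑ i : {v // v ∈ U}, a i • i.val from
    Equiv.sum_comp e (fun i => a i • i.val)]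
  exact hqa
end
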